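/- arXiv:1412.6859 — 3 statements merged into one kernel-verified Lean document; each statement's English description precedes it below -/
import Mathlib

section
/- Let U ⊆ A^{ℤ²} be a nonempty additive shift space. If h_r(U) = (1/(mn)) log Γ_{m×n}(U) for some m,n ≥ 1, then U is a full shift, i.e., U = B^{ℤ²} for some subset B ⊆ A. In particular, if U is not a full shift, then h_r(U) < (1/(mn)) log Γ_{m×n}(U) for every m,n ≥ 1. -/
open Filter
open scoped Classical

/-- The `m × n` rectangular lattice `Z_{m×n}(p)` with bottom-left corner `p`. -/
def Zrect (m n : ℕ) (p : ℤ × ℤ) : Finset (ℤ × ℤ) :=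
  (Finset.range m ×ˢ Finset.range n).image (fun ab => (p.1 + (ab.1 : ℤ), p.2 + (ab.2 : ℤ)))

/-- The number of patterns of `U` seen on the finite window `L`. -/
noncomputable def patternCount {A : Type*} (U : Set ((ℤ × ℤ) → A)) (L : Finset (ℤ × ℤ)) : ℕ :=
  Set.ncard ((fun x => fun p : L => x (p : ℤ × ℤ)) '' U)

/-- An additive shift space: nonempty, closed, translation invariant. -/
def IsShiftSpace {A : Type*} [TopologicalSpace A] (U : Set ((ℤ × ℤ) → A)) : Prop :=
  U.Nonempty ∧ IsClosed U ∧ ∀ v : ℤ × ℤ, ∀ x ∈ U, (fun p => x (p + v)) ∈ U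

/-- An expanding system of finite sublattices of `ℤ²`. -/
def IsExpandingSystem (Ω : ℕ → Finset (ℤ × ℤ)) : Prop :=
  (∀ n, Ω n ⊂ Ω (n + 1)) ∧ ∀ p : ℤ × ℤ, ∃ n, p ∈ Ω n

/-- The interior of a finite lattice. -/
def latInterior (L : Finset (ℤ × ℤ)) : Finset (ℤ × ℤ) :=
  L.filter (fun p => (p.1 + 1, p.2) ∈ L ∧ (p.1, p.2 + 1) ∈ L ∧ (p.1 + 1, p.2 + 1) ∈ L)

/-- The boundary of a finite lattice. -/
def latBoundary (L : Finset (ℤ × ℤ)) : Finset (ℤ × ℤ) := L \ latInterior L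

/-- The rectangular entropy `h_r(U)`. -/
noncomputable def rectEntropy {A : Type*} (U : Set ((ℤ × ℤ) → A)) : ℝ :=
  ⨅ mn : ℕ × ℕ, (1 / (((mn.1 + 1) * (mn.2 + 1) : ℕ) : ℝ)) *
    Real.log (patternCount U (Zrect (mn.1 + 1) (mn.2 + 1) (0, 0)))

/-- The entropy `h_Ω(U)` along an expanding system `Ω`. -/
noncomputable def entropyAlong {A : Type*} (U : Set ((ℤ × ℤ) → A)) (Ω : ℕ → Finset (ℤ × ℤ)) : ℝ :=
  Filter.limsup (fun n => (1 / ((Ω n).card : ℝ)) * Real.log (patternCount U (Ω n))) Filter.atTop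

/-- `Ω_{k,l}(n)`: the union of grid rectangles `Z_{k×l}((ak,bl))` contained in `L`. -/
noncomputable def gridPart (k l : ℕ) (L : Finset (ℤ × ℤ)) : Finset (ℤ × ℤ) :=
  L.filter (fun p => ∃ a b : ℤ,
    p ∈ Zrect k l ((k : ℤ) * a, (l : ℤ) * b) ∧ Zrect k l ((k : ℤ) * a, (l : ℤ) * b) ⊆ L)

/-- `β_{k,l}` : the size of the complement of the grid part. -/
noncomputable def betaKL (k l : ℕ) (L : Finset (ℤ × ℤ)) : ℕ := (L \ gridPart k l L).card

/-- `α_{k,l}` : the number of grid rectangles contained in `L`. -/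
noncomputable def alphaKL (k l : ℕ) (L : Finset (ℤ × ℤ)) : ℕ :=
  Set.ncard {ab : ℤ × ℤ | Zrect k l ((k : ℤ) * ab.1, (l : ℤ) * ab.2) ⊆ L}

/-- A tessellation of `ℤ²`. -/
def IsTessellation (T : Finset (ℤ × ℤ)) : Prop :=
  ∃ v : ℕ → ℤ × ℤ,
    (∀ i j : ℕ, i ≠ j → Disjoint (T.image (· + v i)) (T.image (· + v j))) ∧
    ∀ p : ℤ × ℤ, ∃ i : ℕ, p ∈ T.image (· + v i)

/-- Euclidean distance between points of `ℤ²`. -/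
noncomputable def euclDist (p q : ℤ × ℤ) : ℝ :=
  Real.sqrt (((p.1 - q.1 : ℤ) : ℝ) ^ 2 + ((p.2 - q.2 : ℤ) : ℝ) ^ 2)

/-- Block gluing with gap `M`. -/
def BlockGluingWithGap {A : Type*} (U : Set ((ℤ × ℤ) → A)) (M : ℕ) : Prop :=
  ∀ (m₁ n₁ m₂ n₂ : ℕ) (c₁ c₂ : ℤ × ℤ),
    (∀ p ∈ Zrect m₁ n₁ c₁, ∀ q ∈ Zrect m₂ n₂ c₂, (M : ℝ) ≤ euclDist p q) →
    ∀ x₁ ∈ U, ∀ x₂ ∈ U, ∃ x ∈ U,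
      (∀ p ∈ Zrect m₁ n₁ c₁, x p = x₁ p) ∧ ∀ q ∈ Zrect m₂ n₂ c₂, x q = x₂ q

/-- Block gluing. -/
def IsBlockGluing {A : Type*} (U : Set ((ℤ × ℤ) → A)) : Prop :=
  ∃ M : ℕ, 1 ≤ M ∧ BlockGluingWithGap U M

/-- A full shift on a sub-alphabet. -/
def IsFullShift {A : Type*} (U : Set ((ℤ × ℤ) → A)) : Prop :=
  ∃ B : Set A, U = {x | ∀ p : ℤ × ℤ, x p ∈ B}

/-- Shift of finite type. -/
def IsSFT {A : Type*} (U : Set ((ℤ × ℤ) → A)) : Prop :=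
  ∃ (F : Finset (ℤ × ℤ)) (P : Set (F → A)),
    U = {x | ∀ v : ℤ × ℤ, (fun p : F => x (v + (p : ℤ × ℤ))) ∈ P}

/-- `(i,j)` has horizontal length `m` in `L`. -/
def HasHorizLength (L : Finset (ℤ × ℤ)) (p : ℤ × ℤ) (m : ℕ) : Prop :=
  1 ≤ m ∧ (∃ c : ℤ × ℤ, p ∈ Zrect m 1 c ∧ Zrect m 1 c ⊆ L) ∧
    ∀ m' : ℕ, m < m' → ¬ ∃ c : ℤ × ℤ, p ∈ Zrect m' 1 c ∧ Zrect m' 1 c ⊆ L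

/-- `(i,j)` has vertical length `m` in `L`. -/
def HasVertLength (L : Finset (ℤ × ℤ)) (p : ℤ × ℤ) (m : ℕ) : Prop :=
  1 ≤ m ∧ (∃ c : ℤ × ℤ, p ∈ Zrect 1 m c ∧ Zrect 1 m c ⊆ L) ∧
    ∀ m' : ℕ, m < m' → ¬ ∃ c : ℤ × ℤ, p ∈ Zrect 1 m' c ∧ Zrect 1 m' c ⊆ L

noncomputable def betaHoriz (m : ℕ) (L : Finset (ℤ × ℤ)) : ℕ :=
  (L.filter (fun p => HasHorizLength L p m)).card

noncomputable def betaVert (m : ℕ) (L : Finset (ℤ × ℤ)) : ℕ :=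
  (L.filter (fun p => HasVertLength L p m)).card

/-- The one-dimensional sublattice segment `{s • v : 0 ≤ s ≤ n-1}`. -/
def lineSegment (v : ℤ × ℤ) (n : ℕ) : Finset (ℤ × ℤ) :=
  (Finset.range n).image (fun s : ℕ => ((s : ℤ) * v.1, (s : ℤ) * v.2))

/-- The projectional entropy along the one-dimensional sublattice generated by `v`. -/
noncomputable def projEntropy {A : Type*} (U : Set ((ℤ × ℤ) → A)) (v : ℤ × ℤ) : ℝ :=
  ⨅ n : ℕ, (1 / (n + 1 : ℝ)) * Real.log (patternCount U (lineSegment v (n + 1)))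

/-- `ĥ⁽¹⁾(U)`: supremum of projectional entropies over one-dimensional sublattices. -/
noncomputable def hHatOne {A : Type*} (U : Set ((ℤ × ℤ) → A)) : ℝ :=
  ⨆ v : {w : ℤ × ℤ // w ≠ 0}, projEntropy U (v : ℤ × ℤ)

/-- The horizontal golden-mean shift. -/
def goldenMeanShift : Set ((ℤ × ℤ) → Fin 2) :=
  {x | ∀ p : ℤ × ℤ, x p * x (p.1 + 1, p.2) = 0}

/-- The sequence `a_k`: `a_1 = 2`, `a_2 = 3`, `a_k = a_{k-1} + a_{k-2}`. -/
def aSeq : ℕ → ℕ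
  | 0 => 1
  | 1 => 2
  | (k + 2) => aSeq (k + 1) + aSeq k


set_option linter.unusedSectionVars false
section Basics
variable {A : Type*} [Fintype A]

/-- restriction map -/
def restrictMap (L : Finset (ℤ × ℤ)) (x : (ℤ × ℤ) → A) : (L → A) := fun p => x p

lemma patternCount_eq (U : Set ((ℤ × ℤ) → A)) (L : Finset (ℤ × ℤ)) :
    patternCount U L = (restrictMap L '' U).ncard := rfl

lemma patterns_finite (U : Set ((ℤ × ℤ) → A)) (L : Finset (ℤ × ℤ)) :
    (restrictMap L '' U).Finite := Set.toFinite _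

lemma one_le_patternCount {U : Set ((ℤ × ℤ) → A)} (hne : U.Nonempty) (L : Finset (ℤ × ℤ)) :
    1 ≤ patternCount U L := by
  rw [patternCount_eq]
  have : (restrictMap L '' U).Nonempty := hne.image _
  have := Set.ncard_pos (patterns_finite U L) |>.mpr this
  omega

lemma patternCount_mono (U : Set ((ℤ × ℤ) → A)) {L₂ L₁ : Finset (ℤ × ℤ)} (h : L₂ ⊆ L₁) :
    patternCount U L₂ ≤ patternCount U L₁ := by
  rw [patternCount_eq, patternCount_eq]
  have : restrictMap (A := A) L₂ '' U
      = (fun f : L₁ → A => fun p : L₂ => f ⟨(p : ℤ × ℤ), h p.2⟩) '' (restrictMap L₁ '' U) := by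
    rw [Set.image_image]; rfl
  rw [this]
  exact Set.ncard_image_le (patterns_finite U L₁)

lemma ncard_prod' {α β : Type*} (s : Set α) (t : Set β) :
    (s ×ˢ t).ncard = s.ncard * t.ncard := by
  rw [← Nat.card_coe_set_eq, ← Nat.card_coe_set_eq, ← Nat.card_coe_set_eq,
    Nat.card_congr (Equiv.Set.prod s t), Nat.card_prod]

/-- the pair-restriction map -/
def pairMap (L₁ L₂ : Finset (ℤ × ℤ)) (f : ((L₁ ∪ L₂ : Finset (ℤ × ℤ))) → A) :
    (L₁ → A) × (L₂ → A) :=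
  ⟨fun p => f ⟨(p : ℤ × ℤ), Finset.mem_union_left _ p.2⟩,
   fun p => f ⟨(p : ℤ × ℤ), Finset.mem_union_right _ p.2⟩⟩

lemma pairMap_injective (L₁ L₂ : Finset (ℤ × ℤ)) : Function.Injective (pairMap (A := A) L₁ L₂) := by
  intro f g hfg
  funext p
  obtain ⟨q, hq⟩ := p
  rcases Finset.mem_union.1 hq with h | h
  · exact congrFun (congrArg Prod.fst hfg) ⟨q, h⟩
  · exact congrFun (congrArg Prod.snd hfg) ⟨q, h⟩

lemma pairMap_restrict (L₁ L₂ : Finset (ℤ × ℤ)) (x : (ℤ × ℤ) → A) :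
    pairMap L₁ L₂ (restrictMap (L₁ ∪ L₂) x) = (restrictMap L₁ x, restrictMap L₂ x) := rfl

lemma patternCount_union_le (U : Set ((ℤ × ℤ) → A)) (L₁ L₂ : Finset (ℤ × ℤ)) :
    patternCount U (L₁ ∪ L₂) ≤ patternCount U L₁ * patternCount U L₂ := by
  rw [patternCount_eq, patternCount_eq, patternCount_eq]
  rw [← Set.ncard_image_of_injective _ (pairMap_injective (A := A) L₁ L₂)]
  rw [← ncard_prod']
  apply Set.ncard_le_ncard _ (Set.toFinite _)
  rintro _ ⟨_, ⟨x, hx, rfl⟩, rfl⟩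
  exact ⟨⟨x, hx, rfl⟩, ⟨x, hx, rfl⟩⟩

/-- abstract gluing from a product count identity -/
lemma glue_of_count_eq {U : Set ((ℤ × ℤ) → A)}
    {K K' : Finset (ℤ × ℤ)}
    (hcount : patternCount U (K ∪ K') = patternCount U K * patternCount U K') :
    ∀ x₁ ∈ U, ∀ x₂ ∈ U, ∃ x ∈ U, (∀ p ∈ K, x p = x₁ p) ∧ (∀ p ∈ K', x p = x₂ p) := by
  intro x₁ hx₁ x₂ hx₂
  have himg : pairMap K K' '' (restrictMap (K ∪ K') '' U)
      = (restrictMap K '' U) ×ˢ (restrictMap K' '' U) := by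
    apply Set.eq_of_subset_of_ncard_le
    · rintro _ ⟨_, ⟨x, hx, rfl⟩, rfl⟩
      exact ⟨⟨x, hx, rfl⟩, ⟨x, hx, rfl⟩⟩
    · rw [Set.ncard_image_of_injective _ (pairMap_injective (A := A) K K'), ncard_prod']
      rw [← patternCount_eq, ← patternCount_eq, ← patternCount_eq, ← hcount]
    · exact Set.toFinite _
  have hmem : (restrictMap K x₁, restrictMap K' x₂)
      ∈ pairMap K K' '' (restrictMap (K ∪ K') '' U) := by
    rw [himg]; exact ⟨⟨x₁, hx₁, rfl⟩, ⟨x₂, hx₂, rfl⟩⟩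
  obtain ⟨g, ⟨x, hx, rfl⟩, hg⟩ := hmem
  refine ⟨x, hx, fun p hp => ?_, fun p hp => ?_⟩
  · exact congrFun (congrArg Prod.fst hg) ⟨p, hp⟩
  · exact congrFun (congrArg Prod.snd hg) ⟨p, hp⟩

/-- gluing yields the reverse product inequality -/
lemma mul_le_patternCount_union {U : Set ((ℤ × ℤ) → A)} {L₁ L₂ : Finset (ℤ × ℤ)}
    (hglue : ∀ x₁ ∈ U, ∀ x₂ ∈ U, ∃ x ∈ U,
      (∀ p ∈ L₁, x p = x₁ p) ∧ (∀ p ∈ L₂, x p = x₂ p)) :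
    patternCount U L₁ * patternCount U L₂ ≤ patternCount U (L₁ ∪ L₂) := by
  rw [patternCount_eq, patternCount_eq, patternCount_eq, ← ncard_prod']
  have hsub : (restrictMap L₁ '' U) ×ˢ (restrictMap L₂ '' U)
      ⊆ pairMap L₁ L₂ '' (restrictMap (L₁ ∪ L₂) '' U) := by
    rintro ⟨f₁, f₂⟩ ⟨⟨x₁, hx₁, rfl⟩, ⟨x₂, hx₂, rfl⟩⟩
    obtain ⟨x, hx, h1, h2⟩ := hglue x₁ hx₁ x₂ hx₂
    refine ⟨restrictMap (L₁ ∪ L₂) x, ⟨x, hx, rfl⟩, ?_⟩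
    rw [pairMap_restrict]
    exact Prod.ext (funext fun p => h1 p p.2) (funext fun p => h2 p p.2)
  calc ((restrictMap L₁ '' U) ×ˢ (restrictMap L₂ '' U)).ncard
      ≤ (pairMap L₁ L₂ '' (restrictMap (L₁ ∪ L₂) '' U)).ncard :=
        Set.ncard_le_ncard hsub (Set.toFinite _)
    _ ≤ (restrictMap (L₁ ∪ L₂) '' U).ncard := Set.ncard_image_le (patterns_finite _ _)

end Basics

section ZrectLemmas

lemma mem_Zrect {m n : ℕ} {c q : ℤ × ℤ} :
    q ∈ Zrect m n c ↔ c.1 ≤ q.1 ∧ q.1 < c.1 + m ∧ c.2 ≤ q.2 ∧ q.2 < c.2 + n := by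
  obtain ⟨q1, q2⟩ := q
  constructor
  · intro h
    simp only [Zrect, Finset.mem_image, Finset.mem_product, Finset.mem_range] at h
    obtain ⟨⟨a, b⟩, ⟨ha, hb⟩, h⟩ := h
    simp only [Prod.mk.injEq] at h
    obtain ⟨h1, h2⟩ := h
    simp only []
    omega
  · rintro ⟨h1, h2, h3, h4⟩
    simp only [Zrect, Finset.mem_image, Finset.mem_product, Finset.mem_range]
    refine ⟨⟨(q1 - c.1).toNat, (q2 - c.2).toNat⟩, ⟨?_, ?_⟩, ?_⟩
    · omega
    · omega
    · simp only [Prod.mk.injEq]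
      constructor <;> omega

lemma card_Zrect (m n : ℕ) (c : ℤ × ℤ) : (Zrect m n c).card = m * n := by
  rw [Zrect, Finset.card_image_of_injOn, Finset.card_product, Finset.card_range,
    Finset.card_range]
  rintro ⟨a, b⟩ _ ⟨a', b'⟩ _ h
  simp only [Prod.mk.injEq] at h ⊢
  omega

lemma Zrect_add (m n : ℕ) (c v : ℤ × ℤ) :
    Zrect m n (c + v) = (Zrect m n c).image (· + v) := by
  ext q
  simp only [Finset.mem_image, mem_Zrect, Prod.fst_add, Prod.snd_add]
  constructor
  · rintro ⟨h1, h2, h3, h4⟩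
    refine ⟨q - v, ?_, by simp⟩
    simp only [Prod.fst_sub, Prod.snd_sub]
    omega
  · rintro ⟨r, hr, rfl⟩
    simp only [Prod.fst_add, Prod.snd_add]
    omega

end ZrectLemmas

section Shift
variable {A : Type*} [Fintype A]

/-- transport of patterns along a translation -/
def shiftPat (L : Finset (ℤ × ℤ)) (v : ℤ × ℤ) (f : (L.image (· + v) : Finset (ℤ × ℤ)) → A) :
    (L → A) :=
  fun p => f ⟨(p : ℤ × ℤ) + v, Finset.mem_image_of_mem _ p.2⟩

lemma shiftPat_injective (L : Finset (ℤ × ℤ)) (v : ℤ × ℤ) :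
    Function.Injective (shiftPat (A := A) L v) := by
  intro f g h
  funext q
  obtain ⟨q', hq⟩ := q
  obtain ⟨r, hr, rfl⟩ := Finset.mem_image.1 hq
  exact congrFun h ⟨r, hr⟩

lemma patternCount_image_add {U : Set ((ℤ × ℤ) → A)}
    (hσ : ∀ v : ℤ × ℤ, ∀ x ∈ U, (fun p => x (p + v)) ∈ U) (L : Finset (ℤ × ℤ)) (v : ℤ × ℤ) :
    patternCount U (L.image (· + v)) = patternCount U L := by
  rw [patternCount_eq, patternCount_eq]
  rw [← Set.ncard_image_of_injective _ (shiftPat_injective (A := A) L v)]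
  congr 1
  apply Set.Subset.antisymm
  · rintro _ ⟨_, ⟨x, hx, rfl⟩, rfl⟩
    exact ⟨fun p => x (p + v), hσ v x hx, rfl⟩
  · rintro _ ⟨x, hx, rfl⟩
    refine ⟨restrictMap (L.image (· + v)) (fun p => x (p + -v)),
      ⟨fun p => x (p + -v), hσ (-v) x hx, rfl⟩, ?_⟩
    funext p
    show x ((p : ℤ × ℤ) + v + -v) = x (p : ℤ × ℤ)
    rw [add_neg_cancel_right]

end Shift

section Entropy
variable {A : Type*} [Fintype A]

lemma nat_le_of_log_le {a b : ℕ} (ha : 1 ≤ a) (hb : 1 ≤ b)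
    (h : Real.log a ≤ Real.log b) : a ≤ b := by
  have : (a : ℝ) ≤ b := by
    rw [Real.log_le_log_iff (by exact_mod_cast ha) (by exact_mod_cast hb)] at h
    exact h
  exact_mod_cast this

lemma rectEntropy_le_term {U : Set ((ℤ × ℤ) → A)} (hne : U.Nonempty) {m n : ℕ}
    (hm : m ≠ 0) (hn : n ≠ 0) :
    rectEntropy U ≤ (1 / ((m * n : ℕ) : ℝ)) * Real.log (patternCount U (Zrect m n (0, 0))) := by
  obtain ⟨m', rfl⟩ := Nat.exists_eq_succ_of_ne_zero hm
  obtain ⟨n', rfl⟩ := Nat.exists_eq_succ_of_ne_zero hn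
  exact ciInf_le ⟨0, by
    rintro x ⟨mn, rfl⟩
    exact mul_nonneg (by positivity)
      (Real.log_nonneg (by exact_mod_cast one_le_patternCount hne _))⟩ (m', n')

lemma mul_rectEntropy_le {U : Set ((ℤ × ℤ) → A)} (hne : U.Nonempty) {m n : ℕ}
    (hm : m ≠ 0) (hn : n ≠ 0) :
    ((m : ℝ) * n) * rectEntropy U ≤ Real.log (patternCount U (Zrect m n (0, 0))) := by
  have h := rectEntropy_le_term hne hm hn
  have hpos : (0 : ℝ) < (m : ℝ) * n := by
    have : 0 < m * n := Nat.mul_pos (Nat.pos_of_ne_zero hm) (Nat.pos_of_ne_zero hn)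
    exact_mod_cast this
  rw [Nat.cast_mul] at h
  calc ((m : ℝ) * n) * rectEntropy U
      ≤ ((m : ℝ) * n) * ((1 / ((m : ℝ) * n)) * Real.log (patternCount U (Zrect m n (0, 0)))) :=
        by exact mul_le_mul_of_nonneg_left h hpos.le
    _ = Real.log (patternCount U (Zrect m n (0, 0))) := by field_simp

lemma log_eq_of_attained {U : Set ((ℤ × ℤ) → A)} {m n : ℕ}
    (hm : m ≠ 0) (hn : n ≠ 0)
    (hatt : rectEntropy U =
      (1 / ((m * n : ℕ) : ℝ)) * Real.log (patternCount U (Zrect m n (0, 0)))) :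
    Real.log (patternCount U (Zrect m n (0, 0))) = ((m : ℝ) * n) * rectEntropy U := by
  have hpos : (0 : ℝ) < (m : ℝ) * n := by
    have : 0 < m * n := Nat.mul_pos (Nat.pos_of_ne_zero hm) (Nat.pos_of_ne_zero hn)
    exact_mod_cast this
  rw [Nat.cast_mul] at hatt
  field_simp at hatt
  simp only [Prod.mk_zero_zero] at hatt ⊢
  linarith

lemma attained_of_log_eq {U : Set ((ℤ × ℤ) → A)} {m n : ℕ}
    (hm : m ≠ 0) (hn : n ≠ 0)
    (hlog : Real.log (patternCount U (Zrect m n (0, 0))) = ((m : ℝ) * n) * rectEntropy U) :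
    rectEntropy U =
      (1 / ((m * n : ℕ) : ℝ)) * Real.log (patternCount U (Zrect m n (0, 0))) := by
  have hpos : (0 : ℝ) < (m : ℝ) * n := by
    have : 0 < m * n := Nat.mul_pos (Nat.pos_of_ne_zero hm) (Nat.pos_of_ne_zero hn)
    exact_mod_cast this
  rw [Nat.cast_mul, hlog]
  field_simp

end Entropy

section Steps
variable {A : Type*} [Fintype A] [TopologicalSpace A]
variable {U : Set ((ℤ × ℤ) → A)}

lemma patternCount_Zrect_shift (hσ : ∀ v : ℤ × ℤ, ∀ x ∈ U, (fun p => x (p + v)) ∈ U)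
    (m n : ℕ) (c : ℤ × ℤ) :
    patternCount U (Zrect m n c) = patternCount U (Zrect m n (0, 0)) := by
  have h : Zrect m n c = (Zrect m n (0, 0)).image (· + c) := by
    rw [← Zrect_add]
    congr 1
    simp [Prod.ext_iff]
  rw [h, patternCount_image_add hσ]

lemma attained_step_horiz (hU : IsShiftSpace U) {m n s : ℕ} (hn : n ≠ 0) (hs : s ≠ 0)
    (hsm : s < m)
    (hatt : rectEntropy U =
      (1 / ((m * n : ℕ) : ℝ)) * Real.log (patternCount U (Zrect m n (0, 0)))) :
    rectEntropy U =
      (1 / ((s * n : ℕ) : ℝ)) * Real.log (patternCount U (Zrect s n (0, 0))) := by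
  obtain ⟨hne, hcl, hσ⟩ := hU
  have hm : m ≠ 0 := by omega
  have hms : m - s ≠ 0 := by omega
  set c := rectEntropy U with hc
  have hG1 := one_le_patternCount hne (Zrect m n (0, 0))
  have hGs := one_le_patternCount hne (Zrect s n (0, 0))
  have hGms := one_le_patternCount hne (Zrect (m - s) n (0, 0))
  have hG2 := one_le_patternCount hne (Zrect (m + m) n (0, 0))
  have ha : Zrect (m + m) n (0, 0) = Zrect m n (0, 0) ∪ Zrect m n ((m : ℤ), 0) := by
    ext q; simp only [Finset.mem_union, mem_Zrect]; push_cast; omega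
  have hb : Zrect (m - s) n ((s : ℤ), 0) ∪ Zrect s n ((m : ℤ), 0) = Zrect m n ((s : ℤ), 0) := by
    ext q; simp only [Finset.mem_union, mem_Zrect]; push_cast [Nat.cast_sub hsm.le]; omega
  have hsub1 : Zrect (m - s) n ((s : ℤ), 0) ⊆ Zrect m n (0, 0) := by
    intro q hq; rw [mem_Zrect] at hq ⊢
    push_cast [Nat.cast_sub hsm.le] at hq; constructor <;> omega
  have hsub2 : Zrect s n ((m : ℤ), 0) ⊆ Zrect m n ((m : ℤ), 0) := by
    intro q hq; rw [mem_Zrect] at hq ⊢; constructor <;> omega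
  have hlog := log_eq_of_attained hm hn hatt
  have hdbl : patternCount U (Zrect (m + m) n (0, 0))
      = patternCount U (Zrect m n (0, 0)) * patternCount U (Zrect m n (0, 0)) := by
    apply le_antisymm
    · calc patternCount U (Zrect (m + m) n (0, 0))
          ≤ patternCount U (Zrect m n (0, 0)) * patternCount U (Zrect m n ((m : ℤ), 0)) := by
            rw [ha]; exact patternCount_union_le U _ _
        _ = _ := by rw [patternCount_Zrect_shift hσ m n ((m : ℤ), 0)]
    · apply nat_le_of_log_le (Nat.one_le_iff_ne_zero.2 (by positivity)) hG2
      rw [Nat.cast_mul, Real.log_mul (by exact_mod_cast Nat.one_le_iff_ne_zero.1 hG1)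
        (by exact_mod_cast Nat.one_le_iff_ne_zero.1 hG1), hlog]
      have h2 := mul_rectEntropy_le hne (show m + m ≠ 0 by omega) hn
      rw [← hc] at h2
      push_cast at h2
      linarith
  have hcount : patternCount U (Zrect m n (0, 0) ∪ Zrect m n ((m : ℤ), 0))
      = patternCount U (Zrect m n (0, 0)) * patternCount U (Zrect m n ((m : ℤ), 0)) := by
    rw [← ha, hdbl, patternCount_Zrect_shift hσ m n ((m : ℤ), 0)]
  have hglue := glue_of_count_eq hcount
  have hrev : patternCount U (Zrect (m - s) n ((s : ℤ), 0))
        * patternCount U (Zrect s n ((m : ℤ), 0))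
      ≤ patternCount U (Zrect m n ((s : ℤ), 0)) := by
    rw [← hb]
    apply mul_le_patternCount_union
    intro x₁ hx₁ x₂ hx₂
    obtain ⟨x, hx, h1, h2⟩ := hglue x₁ hx₁ x₂ hx₂
    exact ⟨x, hx, fun p hp => h1 p (hsub1 hp), fun p hp => h2 p (hsub2 hp)⟩
  rw [patternCount_Zrect_shift hσ (m - s) n ((s : ℤ), 0),
    patternCount_Zrect_shift hσ s n ((m : ℤ), 0),
    patternCount_Zrect_shift hσ m n ((s : ℤ), 0)] at hrev
  have hlogrev : Real.log (patternCount U (Zrect (m - s) n (0, 0)))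
      + Real.log (patternCount U (Zrect s n (0, 0))) ≤ ((m : ℝ) * n) * c := by
    rw [← Real.log_mul (by exact_mod_cast Nat.one_le_iff_ne_zero.1 hGms)
      (by exact_mod_cast Nat.one_le_iff_ne_zero.1 hGs), ← hlog]
    apply (Real.log_le_log_iff (by positivity) (by exact_mod_cast hG1)).2
    exact_mod_cast hrev
  have hlow_s := mul_rectEntropy_le hne hs hn
  have hlow_ms := mul_rectEntropy_le hne hms hn
  rw [← hc] at hlow_s hlow_ms
  have hcast : ((m - s : ℕ) : ℝ) = (m : ℝ) - s := by
    push_cast [Nat.cast_sub hsm.le]; ring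
  rw [hcast] at hlow_ms
  apply attained_of_log_eq hs hn
  rw [← hc]
  have hkey : ((m : ℝ) - s) * n * c + (s : ℝ) * n * c = (m : ℝ) * n * c := by ring
  linarith

lemma attained_step_vert (hU : IsShiftSpace U) {m n s : ℕ} (hm : m ≠ 0) (hs : s ≠ 0)
    (hsn : s < n)
    (hatt : rectEntropy U =
      (1 / ((m * n : ℕ) : ℝ)) * Real.log (patternCount U (Zrect m n (0, 0)))) :
    rectEntropy U =
      (1 / ((m * s : ℕ) : ℝ)) * Real.log (patternCount U (Zrect m s (0, 0))) := by
  obtain ⟨hne, hcl, hσ⟩ := hU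
  have hn : n ≠ 0 := by omega
  have hns : n - s ≠ 0 := by omega
  set c := rectEntropy U with hc
  have hG1 := one_le_patternCount hne (Zrect m n (0, 0))
  have hGs := one_le_patternCount hne (Zrect m s (0, 0))
  have hGns := one_le_patternCount hne (Zrect m (n - s) (0, 0))
  have hG2 := one_le_patternCount hne (Zrect m (n + n) (0, 0))
  have ha : Zrect m (n + n) (0, 0) = Zrect m n (0, 0) ∪ Zrect m n (0, (n : ℤ)) := by
    ext q; simp only [Finset.mem_union, mem_Zrect]; push_cast; omega
  have hb : Zrect m (n - s) (0, (s : ℤ)) ∪ Zrect m s (0, (n : ℤ)) = Zrect m n (0, (s : ℤ)) := by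
    ext q; simp only [Finset.mem_union, mem_Zrect]; push_cast [Nat.cast_sub hsn.le]; omega
  have hsub1 : Zrect m (n - s) (0, (s : ℤ)) ⊆ Zrect m n (0, 0) := by
    intro q hq; rw [mem_Zrect] at hq ⊢
    push_cast [Nat.cast_sub hsn.le] at hq; constructor <;> omega
  have hsub2 : Zrect m s (0, (n : ℤ)) ⊆ Zrect m n (0, (n : ℤ)) := by
    intro q hq; rw [mem_Zrect] at hq ⊢; constructor <;> omega
  have hlog := log_eq_of_attained hm hn hatt
  have hdbl : patternCount U (Zrect m (n + n) (0, 0))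
      = patternCount U (Zrect m n (0, 0)) * patternCount U (Zrect m n (0, 0)) := by
    apply le_antisymm
    · calc patternCount U (Zrect m (n + n) (0, 0))
          ≤ patternCount U (Zrect m n (0, 0)) * patternCount U (Zrect m n (0, (n : ℤ))) := by
            rw [ha]; exact patternCount_union_le U _ _
        _ = _ := by rw [patternCount_Zrect_shift hσ m n (0, (n : ℤ))]
    · apply nat_le_of_log_le (Nat.one_le_iff_ne_zero.2 (by positivity)) hG2
      rw [Nat.cast_mul, Real.log_mul (by exact_mod_cast Nat.one_le_iff_ne_zero.1 hG1)
        (by exact_mod_cast Nat.one_le_iff_ne_zero.1 hG1), hlog]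
      have h2 := mul_rectEntropy_le hne hm (show n + n ≠ 0 by omega)
      rw [← hc] at h2
      push_cast at h2
      linarith
  have hcount : patternCount U (Zrect m n (0, 0) ∪ Zrect m n (0, (n : ℤ)))
      = patternCount U (Zrect m n (0, 0)) * patternCount U (Zrect m n (0, (n : ℤ))) := by
    rw [← ha, hdbl, patternCount_Zrect_shift hσ m n (0, (n : ℤ))]
  have hglue := glue_of_count_eq hcount
  have hrev : patternCount U (Zrect m (n - s) (0, (s : ℤ)))
        * patternCount U (Zrect m s (0, (n : ℤ)))
      ≤ patternCount U (Zrect m n (0, (s : ℤ))) := by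
    rw [← hb]
    apply mul_le_patternCount_union
    intro x₁ hx₁ x₂ hx₂
    obtain ⟨x, hx, h1, h2⟩ := hglue x₁ hx₁ x₂ hx₂
    exact ⟨x, hx, fun p hp => h1 p (hsub1 hp), fun p hp => h2 p (hsub2 hp)⟩
  rw [patternCount_Zrect_shift hσ m (n - s) (0, (s : ℤ)),
    patternCount_Zrect_shift hσ m s (0, (n : ℤ)),
    patternCount_Zrect_shift hσ m n (0, (s : ℤ))] at hrev
  have hlogrev : Real.log (patternCount U (Zrect m (n - s) (0, 0)))
      + Real.log (patternCount U (Zrect m s (0, 0))) ≤ ((m : ℝ) * n) * c := by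
    rw [← Real.log_mul (by exact_mod_cast Nat.one_le_iff_ne_zero.1 hGns)
      (by exact_mod_cast Nat.one_le_iff_ne_zero.1 hGs), ← hlog]
    apply (Real.log_le_log_iff (by positivity) (by exact_mod_cast hG1)).2
    exact_mod_cast hrev
  have hlow_s := mul_rectEntropy_le hne hm hs
  have hlow_ns := mul_rectEntropy_le hne hm hns
  rw [← hc] at hlow_s hlow_ns
  have hcast : ((n - s : ℕ) : ℝ) = (n : ℝ) - s := by
    push_cast [Nat.cast_sub hsn.le]; ring
  rw [hcast] at hlow_ns
  apply attained_of_log_eq hm hs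
  rw [← hc]
  have hkey : (m : ℝ) * ((n : ℝ) - s) * c + (m : ℝ) * s * c = (m : ℝ) * n * c := by ring
  linarith

end Steps

section Symbols
variable {A : Type*} [Fintype A] [TopologicalSpace A]
variable {U : Set ((ℤ × ℤ) → A)}

/-- the sub-alphabet of symbols appearing in `U` -/
def symbSet (U : Set ((ℤ × ℤ) → A)) : Set A := (fun x => x ((0 : ℤ), (0 : ℤ))) '' U

lemma mem_symbSet (hσ : ∀ v : ℤ × ℤ, ∀ x ∈ U, (fun p => x (p + v)) ∈ U)
    {x : (ℤ × ℤ) → A} (hx : x ∈ U) (p : ℤ × ℤ) : x p ∈ symbSet U := by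
  refine ⟨fun q => x (q + p), hσ p x hx, ?_⟩
  show x (((0 : ℤ), (0 : ℤ)) + p) = x p
  congr 1
  simp [Prod.ext_iff]

lemma ncard_pi (L : Finset (ℤ × ℤ)) (B : Set A) :
    {f : L → A | ∀ i, f i ∈ B}.ncard = B.ncard ^ L.card := by
  rw [← Nat.card_coe_set_eq, ← Nat.card_coe_set_eq]
  have e : ↥{f : L → A | ∀ i, f i ∈ B} ≃ (L → B) :=
    { toFun := fun f i => ⟨f.1 i, f.2 i⟩
      invFun := fun g => ⟨fun i => g i, fun i => (g i).2⟩
      left_inv := fun f => rfl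
      right_inv := fun g => rfl }
  rw [Nat.card_congr e, Nat.card_fun, Nat.card_eq_fintype_card (α := ↥L), Fintype.card_coe]

lemma patternCount_le_pow (hσ : ∀ v : ℤ × ℤ, ∀ x ∈ U, (fun p => x (p + v)) ∈ U)
    (L : Finset (ℤ × ℤ)) :
    patternCount U L ≤ (symbSet U).ncard ^ L.card := by
  rw [patternCount_eq, ← ncard_pi L (symbSet U)]
  apply Set.ncard_le_ncard _ (Set.toFinite _)
  rintro _ ⟨x, hx, rfl⟩
  exact fun i => mem_symbSet hσ hx i

lemma patternCount_singleton (U : Set ((ℤ × ℤ) → A)) :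
    patternCount U (Zrect 1 1 (0, 0)) = (symbSet U).ncard := by
  have hL : Zrect 1 1 ((0 : ℤ), (0 : ℤ)) = {((0 : ℤ), (0 : ℤ))} := by
    ext q
    simp only [mem_Zrect, Finset.mem_singleton, Prod.ext_iff]
    omega
  rw [patternCount_eq]
  have hmem : ((0 : ℤ), (0 : ℤ)) ∈ Zrect 1 1 ((0 : ℤ), (0 : ℤ)) := by
    rw [hL]; exact Finset.mem_singleton_self _
  set e : ((Zrect 1 1 ((0 : ℤ), (0 : ℤ))) → A) → A := fun f => f ⟨((0 : ℤ), (0 : ℤ)), hmem⟩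
    with he
  have hinj : Function.Injective e := by
    intro f g h
    funext q
    obtain ⟨q', hq⟩ := q
    have : q' = ((0 : ℤ), (0 : ℤ)) := by
      rw [hL] at hq; exact Finset.mem_singleton.1 hq
    subst this
    exact h
  rw [← Set.ncard_image_of_injective _ hinj]
  congr 1
  rw [Set.image_image]
  rfl

/-- if the count on `L` is maximal, every `B`-valued pattern on `L` occurs -/
lemma exists_of_count_eq_pow (hσ : ∀ v : ℤ × ℤ, ∀ x ∈ U, (fun p => x (p + v)) ∈ U)
    {L : Finset (ℤ × ℤ)}
    (hcnt : patternCount U L = (symbSet U).ncard ^ L.card)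
    (f : (ℤ × ℤ) → A) (hf : ∀ p, f p ∈ symbSet U) :
    ∃ x ∈ U, ∀ p ∈ L, x p = f p := by
  have heq : restrictMap L '' U = {g : L → A | ∀ i, g i ∈ symbSet U} := by
    apply Set.eq_of_subset_of_ncard_le
    · rintro _ ⟨x, hx, rfl⟩
      exact fun i => mem_symbSet hσ hx i
    · rw [ncard_pi, ← hcnt, patternCount_eq]
    · exact Set.toFinite _
  have : restrictMap L f ∈ restrictMap (A := A) L '' U := by
    rw [heq]; exact fun i => hf i
  obtain ⟨x, hx, hxf⟩ := this
  exact ⟨x, hx, fun p hp => congrFun hxf ⟨p, hp⟩⟩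

end Symbols

section Final
variable {A : Type*} [Fintype A] [TopologicalSpace A] [DiscreteTopology A]
variable {U : Set ((ℤ × ℤ) → A)}

lemma isFullShift_of_attained (hU : IsShiftSpace U) {m n : ℕ} (hm : m ≠ 0) (hn : n ≠ 0)
    (hatt : rectEntropy U =
      (1 / ((m * n : ℕ) : ℝ)) * Real.log (patternCount U (Zrect m n (0, 0)))) :
    IsFullShift U := by
  have hne := hU.1
  have hcl := hU.2.1
  have hσ := hU.2.2
  -- reduce to a 1 × n attained identity
  have att1n : rectEntropy U =
      (1 / ((1 * n : ℕ) : ℝ)) * Real.log (patternCount U (Zrect 1 n (0, 0))) := by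
    by_cases hm1 : m = 1
    · subst hm1; exact hatt
    · exact attained_step_horiz hU hn one_ne_zero (by omega) hatt
  -- reduce to the 1 × 1 attained identity
  have att11 : rectEntropy U =
      (1 / ((1 * 1 : ℕ) : ℝ)) * Real.log (patternCount U (Zrect 1 1 (0, 0))) := by
    by_cases hn1 : n = 1
    · subst hn1; exact att1n
    · exact attained_step_vert hU one_ne_zero one_ne_zero (by omega) att1n
  have ht : patternCount U (Zrect 1 1 (0, 0)) = (symbSet U).ncard := patternCount_singleton U
  have ht1 : 1 ≤ (symbSet U).ncard := by rw [← ht]; exact one_le_patternCount hne _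
  have hclog : rectEntropy U = Real.log ((symbSet U).ncard : ℝ) := by
    rw [att11, ht]; norm_num
  have hall : ∀ k l : ℕ, k ≠ 0 → l ≠ 0 →
      patternCount U (Zrect k l (0, 0)) = (symbSet U).ncard ^ (k * l) := by
    intro k l hk hl
    apply le_antisymm
    · have := patternCount_le_pow hσ (Zrect k l (0, 0))
      rwa [card_Zrect] at this
    · have hlow := mul_rectEntropy_le hne hk hl
      rw [hclog] at hlow
      apply nat_le_of_log_le (Nat.one_le_iff_ne_zero.2 (by positivity))
        (one_le_patternCount hne _)
      rw [Nat.cast_pow, Real.log_pow]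
      push_cast at hlow ⊢
      linarith
  refine ⟨symbSet U, Set.Subset.antisymm (fun x hx p => mem_symbSet hσ hx p) ?_⟩
  intro y hy
  have happ : ∀ j : ℕ, ∃ x ∈ U,
      ∀ p ∈ Zrect (2 * j + 1) (2 * j + 1) (-(j : ℤ), -(j : ℤ)), x p = y p := by
    intro j
    apply exists_of_count_eq_pow hσ ?_ y hy
    rw [patternCount_Zrect_shift hσ, card_Zrect, hall _ _ (by omega) (by omega)]
  choose x hxU hxy using happ
  have htd : Filter.Tendsto x Filter.atTop (nhds y) := by
    rw [tendsto_pi_nhds]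
    intro p
    have hev : ∀ᶠ j in Filter.atTop, x j p = y p := by
      rw [Filter.eventually_atTop]
      refine ⟨p.1.natAbs + p.2.natAbs, fun j hj => ?_⟩
      apply hxy j
      rw [mem_Zrect]
      push_cast
      omega
    exact Filter.Tendsto.congr' (hev.mono fun j h => h.symm) tendsto_const_nhds
  exact hcl.mem_of_tendsto htd (Filter.Eventually.of_forall hxU)

end Final


/-- Proposition 2.2: if `h_r(U) = (1/(mn)) log Γ_{m×n}(U)` for some
`m,n ≥ 1`, then `U` is a full shift; in particular, if `U` is not a full shift then
`h_r(U) < (1/(mn)) log Γ_{m×n}(U)` for every `m,n ≥ 1`. -/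
theorem isFullShift_of_rectEntropy_attained {A : Type*} [Fintype A] [TopologicalSpace A]
    [DiscreteTopology A] (hcard : 2 ≤ Fintype.card A)
    (U : Set ((ℤ × ℤ) → A)) (hU : IsShiftSpace U) :
    (∀ m n : ℕ, 1 ≤ m → 1 ≤ n →
        rectEntropy U = (1 / ((m * n : ℕ) : ℝ)) * Real.log (patternCount U (Zrect m n (0, 0))) →
        IsFullShift U) ∧
      (¬ IsFullShift U → ∀ m n : ℕ, 1 ≤ m → 1 ≤ n →
        rectEntropy U < (1 / ((m * n : ℕ) : ℝ)) * Real.log (patternCount U (Zrect m n (0, 0)))) := by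
  constructor
  · intro m n hm hn hatt
    exact isFullShift_of_attained hU (by omega) (by omega) hatt
  · intro hnf m n hm hn
    refine lt_of_le_of_ne (rectEntropy_le_term hU.1 (by omega) (by omega)) ?_
    intro h
    exact hnf (isFullShift_of_attained hU (by omega) (by omega) h)
end

section
/- Let Ω = {Ω(n)}_{n≥1} be an expanding system of finite subsets of ℤ². If there exists m ≥ 1 such that limsup_{n→∞} β_m^{(h)}(n)/|Ω(n)| > 0 or limsup_{n→∞} β_m^{(v)}(n)/|Ω(n)| > 0, then there exists an additive shift of finite type U ⊂ {0,1}^{ℤ²} such that h_Ω(U) > h_r(U). -/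
open Filter
open scoped Classical

namespace SFTAux

/-! ### Basic lemmas about `Zrect` -/

lemma mem_Zrect {k l : ℕ} {c q : ℤ × ℤ} :
    q ∈ Zrect k l c ↔ c.1 ≤ q.1 ∧ q.1 < c.1 + k ∧ c.2 ≤ q.2 ∧ q.2 < c.2 + l := by
  simp only [Zrect, Finset.mem_image, Finset.mem_product, Finset.mem_range, Prod.ext_iff]
  constructor
  · rintro ⟨⟨a, b⟩, ⟨ha, hb⟩, h1, h2⟩
    simp only at h1 h2
    omega
  · rintro ⟨h1, h2, h3, h4⟩
    exact ⟨⟨(q.1 - c.1).toNat, (q.2 - c.2).toNat⟩, ⟨by omega, by omega⟩, by simp; omega, by simp; omega⟩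

lemma card_Zrect (k l : ℕ) (c : ℤ × ℤ) : (Zrect k l c).card = k * l := by
  rw [Zrect, Finset.card_image_of_injective _ (fun a b hab => by
    simp only [Prod.ext_iff] at hab
    exact Prod.ext (by omega) (by omega))]
  simp

lemma Zrect_image_add (k l : ℕ) (c : ℤ × ℤ) :
    (Zrect k l (0, 0)).image (· + c) = Zrect k l c := by
  ext q
  simp only [Finset.mem_image, mem_Zrect]
  constructor
  · rintro ⟨p, hp, rfl⟩
    simp only [Prod.fst_add, Prod.snd_add] at *
    omega
  · intro hq
    refine ⟨q - c, ?_, by simp⟩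
    simp only [Prod.fst_sub, Prod.snd_sub] at *
    omega

lemma Zrect_image_swap (k l : ℕ) (c : ℤ × ℤ) :
    (Zrect k l c).image Prod.swap = Zrect l k c.swap := by
  ext q
  simp only [Finset.mem_image, mem_Zrect, Prod.fst_swap, Prod.snd_swap]
  constructor
  · rintro ⟨p, hp, rfl⟩
    simp only [Prod.fst_swap, Prod.snd_swap] at *
    omega
  · intro hq
    refine ⟨q.swap, ?_, by simp⟩
    simp only [Prod.fst_swap, Prod.snd_swap] at *
    omega

/-! ### Basic lemmas about `patternCount` -/

lemma patternCount_pos {U : Set ((ℤ × ℤ) → Fin 2)} (hU : U.Nonempty) (L : Finset (ℤ × ℤ)) :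
    1 ≤ patternCount U L := by
  unfold patternCount
  exact (Set.ncard_pos (Set.toFinite _)).mpr (hU.image _)

lemma patternCount_le (U : Set ((ℤ × ℤ) → Fin 2)) (L : Finset (ℤ × ℤ)) :
    patternCount U L ≤ 2 ^ L.card := by
  unfold patternCount
  calc Set.ncard _ ≤ (Set.univ : Set (L → Fin 2)).ncard :=
        Set.ncard_le_ncard (Set.subset_univ _) (Set.toFinite _)
    _ = Fintype.card (L → Fin 2) := by rw [Set.ncard_univ, Nat.card_eq_fintype_card]
    _ = 2 ^ L.card := by simp [Fintype.card_fun]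

/-- Pattern counts transform under composition with a map of the lattice. -/
lemma patternCount_comp (U : Set ((ℤ × ℤ) → Fin 2)) (φ : ℤ × ℤ → ℤ × ℤ) (L : Finset (ℤ × ℤ)) :
    patternCount ((fun x => x ∘ φ) '' U) L = patternCount U (L.image φ) := by
  classical
  show _ = Set.ncard _
  set M : Finset (ℤ × ℤ) := L.image φ with hM
  set e : L → M := fun p => ⟨φ p, Finset.mem_image_of_mem φ p.2⟩
  have he : Function.Surjective e := by
    rintro ⟨q, hq⟩
    obtain ⟨p, hp, rfl⟩ := Finset.mem_image.mp hq
    exact ⟨⟨p, hp⟩, rfl⟩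
  set Ψ : (M → Fin 2) → (L → Fin 2) := fun f => f ∘ e
  have hΨ : Function.Injective Ψ := fun f g hfg => by
    funext q
    obtain ⟨p, rfl⟩ := he q
    exact congrFun hfg p
  have himg : (fun x : (ℤ × ℤ) → Fin 2 => fun p : L => x (p : ℤ × ℤ)) '' ((fun x => x ∘ φ) '' U)
      = Ψ '' ((fun x : (ℤ × ℤ) → Fin 2 => fun p : M => x (p : ℤ × ℤ)) '' U) := by
    rw [← Set.image_comp, ← Set.image_comp]
    rfl
  unfold patternCount
  rw [himg, Set.ncard_image_of_injective _ hΨ]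

/-- Shifts of a shift-invariant set. -/
lemma shift_image_eq {U : Set ((ℤ × ℤ) → Fin 2)}
    (hU : ∀ v : ℤ × ℤ, ∀ x ∈ U, (fun p => x (p + v)) ∈ U) (v : ℤ × ℤ) :
    (fun x : (ℤ × ℤ) → Fin 2 => x ∘ (· + v)) '' U = U := by
  apply Set.Subset.antisymm
  · rintro _ ⟨x, hx, rfl⟩
    exact hU v x hx
  · intro x hx
    refine ⟨fun p => x (p + -v), hU (-v) x hx, ?_⟩
    funext p
    simp [Function.comp]

lemma patternCount_image_add {U : Set ((ℤ × ℤ) → Fin 2)}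
    (hU : ∀ v : ℤ × ℤ, ∀ x ∈ U, (fun p => x (p + v)) ∈ U) (v : ℤ × ℤ) (L : Finset (ℤ × ℤ)) :
    patternCount U (L.image (· + v)) = patternCount U L := by
  rw [← patternCount_comp U (· + v) L, shift_image_eq hU]

/-! ### The SFT forbidding horizontal runs of `m+1` ones -/

def Um (m : ℕ) : Set ((ℤ × ℤ) → Fin 2) :=
  {x | ∀ p : ℤ × ℤ, ∃ k : ℕ, k ≤ m ∧ x (p.1 + k, p.2) = 0}

def UmV (m : ℕ) : Set ((ℤ × ℤ) → Fin 2) :=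
  {x | ∀ p : ℤ × ℤ, ∃ k : ℕ, k ≤ m ∧ x (p.1, p.2 + k) = 0}

lemma Um_nonempty (m : ℕ) : (Um m).Nonempty :=
  ⟨fun _ => 0, fun p => ⟨0, Nat.zero_le m, rfl⟩⟩

lemma UmV_nonempty (m : ℕ) : (UmV m).Nonempty :=
  ⟨fun _ => 0, fun p => ⟨0, Nat.zero_le m, rfl⟩⟩

lemma Um_shift (m : ℕ) : ∀ v : ℤ × ℤ, ∀ x ∈ Um m, (fun p => x (p + v)) ∈ Um m := by
  intro v x hx p
  obtain ⟨k, hk, hzero⟩ := hx (p.1 + v.1, p.2 + v.2)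
  refine ⟨k, hk, ?_⟩
  show x ((p.1 + k, p.2) + v) = 0
  convert hzero using 2
  simp [Prod.ext_iff]
  ring

lemma UmV_shift (m : ℕ) : ∀ v : ℤ × ℤ, ∀ x ∈ UmV m, (fun p => x (p + v)) ∈ UmV m := by
  intro v x hx p
  obtain ⟨k, hk, hzero⟩ := hx (p.1 + v.1, p.2 + v.2)
  refine ⟨k, hk, ?_⟩
  show x ((p.1, p.2 + k) + v) = 0
  convert hzero using 2
  simp [Prod.ext_iff]
  ring

lemma isClosed_eval_zero (q : ℤ × ℤ) : IsClosed {x : (ℤ × ℤ) → Fin 2 | x q = 0} := by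
  have : {x : (ℤ × ℤ) → Fin 2 | x q = 0} = (fun x : (ℤ × ℤ) → Fin 2 => x q) ⁻¹' {0} := rfl
  rw [this]
  exact (isClosed_discrete _).preimage (continuous_apply q)

lemma Um_isShiftSpace (m : ℕ) : IsShiftSpace (Um m) := by
  refine ⟨Um_nonempty m, ?_, Um_shift m⟩
  have : Um m = ⋂ p : ℤ × ℤ, ⋃ k ∈ Finset.range (m + 1), {x : (ℤ × ℤ) → Fin 2 | x (p.1 + k, p.2) = 0} := by
    ext x
    simp only [Um, Set.mem_setOf_eq, Set.mem_iInter, Set.mem_iUnion, Finset.mem_range]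
    exact forall_congr' fun p => ⟨fun ⟨k, hk, h⟩ => ⟨k, by omega, h⟩, fun ⟨k, hk, h⟩ => ⟨k, by omega, h⟩⟩
  rw [this]
  exact isClosed_iInter fun p => isClosed_biUnion_finset fun k _ => isClosed_eval_zero _

lemma UmV_isShiftSpace (m : ℕ) : IsShiftSpace (UmV m) := by
  refine ⟨UmV_nonempty m, ?_, UmV_shift m⟩
  have : UmV m = ⋂ p : ℤ × ℤ, ⋃ k ∈ Finset.range (m + 1), {x : (ℤ × ℤ) → Fin 2 | x (p.1, p.2 + k) = 0} := by
    ext x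
    simp only [UmV, Set.mem_setOf_eq, Set.mem_iInter, Set.mem_iUnion, Finset.mem_range]
    exact forall_congr' fun p => ⟨fun ⟨k, hk, h⟩ => ⟨k, by omega, h⟩, fun ⟨k, hk, h⟩ => ⟨k, by omega, h⟩⟩
  rw [this]
  exact isClosed_iInter fun p => isClosed_biUnion_finset fun k _ => isClosed_eval_zero _

lemma Um_isSFT (m : ℕ) : IsSFT (Um m) := by
  classical
  refine ⟨Zrect (m + 1) 1 (0, 0), {f | ∃ q, f q = 0}, ?_⟩
  ext x
  simp only [Um, Set.mem_setOf_eq]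
  constructor
  · intro hx v
    obtain ⟨k, hk, hzero⟩ := hx v
    have hq : ((k : ℤ), (0 : ℤ)) ∈ Zrect (m + 1) 1 (0, 0) := by
      rw [mem_Zrect]; simp; omega
    refine ⟨⟨((k : ℤ), (0 : ℤ)), hq⟩, ?_⟩
    show x (v + ((k : ℤ), (0 : ℤ))) = 0
    convert hzero using 2
    simp [Prod.ext_iff]
  · intro hx p
    obtain ⟨⟨q, hq⟩, hzero⟩ := hx p
    rw [mem_Zrect] at hq
    simp only at hq
    refine ⟨q.1.toNat, by omega, ?_⟩
    show x (p.1 + (q.1.toNat : ℤ), p.2) = 0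
    convert hzero using 2
    simp [Prod.ext_iff]
    omega

lemma UmV_isSFT (m : ℕ) : IsSFT (UmV m) := by
  classical
  refine ⟨Zrect 1 (m + 1) (0, 0), {f | ∃ q, f q = 0}, ?_⟩
  ext x
  simp only [UmV, Set.mem_setOf_eq]
  constructor
  · intro hx v
    obtain ⟨k, hk, hzero⟩ := hx v
    have hq : ((0 : ℤ), (k : ℤ)) ∈ Zrect 1 (m + 1) (0, 0) := by
      rw [mem_Zrect]; simp; omega
    refine ⟨⟨((0 : ℤ), (k : ℤ)), hq⟩, ?_⟩
    show x (v + ((0 : ℤ), (k : ℤ))) = 0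
    convert hzero using 2
    simp [Prod.ext_iff]
  · intro hx p
    obtain ⟨⟨q, hq⟩, hzero⟩ := hx p
    rw [mem_Zrect] at hq
    simp only at hq
    refine ⟨q.2.toNat, by omega, ?_⟩
    show x (p.1, p.2 + (q.2.toNat : ℤ)) = 0
    convert hzero using 2
    simp [Prod.ext_iff]
    omega

lemma UmV_eq_image (m : ℕ) : (fun x : (ℤ × ℤ) → Fin 2 => x ∘ Prod.swap) '' Um m = UmV m := by
  ext y
  constructor
  · rintro ⟨x, hx, rfl⟩
    intro p
    obtain ⟨k, hk, hzero⟩ := hx (p.2, p.1)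
    exact ⟨k, hk, hzero⟩
  · intro hy
    refine ⟨y ∘ Prod.swap, ?_, by funext p; simp⟩
    intro p
    obtain ⟨k, hk, hzero⟩ := hy (p.2, p.1)
    exact ⟨k, hk, hzero⟩

/-! ### Maximal horizontal segments -/

lemma exists_out_right (L : Finset (ℤ × ℤ)) (q : ℤ × ℤ) :
    ∃ k : ℕ, (q.1 + (k : ℤ) + 1, q.2) ∉ L := by
  by_contra h
  push_neg at h
  have hinj : Function.Injective (fun k : ℕ => (⟨(q.1 + (k : ℤ) + 1, q.2), h k⟩ : L)) := by
    intro a b hab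
    simp only [Subtype.mk.injEq, Prod.mk.injEq] at hab
    omega
  obtain ⟨a, b, hne, hab⟩ := Finite.exists_ne_map_eq_of_infinite
    (fun k : ℕ => (⟨(q.1 + (k : ℤ) + 1, q.2), h k⟩ : L))
  exact hne (hinj hab)

lemma exists_out_left (L : Finset (ℤ × ℤ)) (q : ℤ × ℤ) :
    ∃ k : ℕ, (q.1 - (k : ℤ) - 1, q.2) ∉ L := by
  by_contra h
  push_neg at h
  have hinj : Function.Injective (fun k : ℕ => (⟨(q.1 - (k : ℤ) - 1, q.2), h k⟩ : L)) := by
    intro a b hab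
    simp only [Subtype.mk.injEq, Prod.mk.injEq] at hab
    omega
  obtain ⟨a, b, hne, hab⟩ := Finite.exists_ne_map_eq_of_infinite
    (fun k : ℕ => (⟨(q.1 - (k : ℤ) - 1, q.2), h k⟩ : L))
  exact hne (hinj hab)

noncomputable def rext (L : Finset (ℤ × ℤ)) (q : ℤ × ℤ) : ℕ := Nat.find (exists_out_right L q)

noncomputable def lext (L : Finset (ℤ × ℤ)) (q : ℤ × ℤ) : ℕ := Nat.find (exists_out_left L q)

noncomputable def seg (L : Finset (ℤ × ℤ)) (q : ℤ × ℤ) : Finset (ℤ × ℤ) :=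
  Zrect (lext L q + rext L q + 1) 1 (q.1 - lext L q, q.2)

lemma right_out (L : Finset (ℤ × ℤ)) (q : ℤ × ℤ) : (q.1 + (rext L q : ℤ) + 1, q.2) ∉ L :=
  Nat.find_spec (exists_out_right L q)

lemma left_out (L : Finset (ℤ × ℤ)) (q : ℤ × ℤ) : (q.1 - (lext L q : ℤ) - 1, q.2) ∉ L :=
  Nat.find_spec (exists_out_left L q)

lemma right_in {L : Finset (ℤ × ℤ)} {q : ℤ × ℤ} (hq : q ∈ L) :
    ∀ s : ℕ, (s : ℤ) ≤ (rext L q : ℤ) → (q.1 + (s : ℤ), q.2) ∈ L := by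
  intro s hs
  cases s with
  | zero => simpa using hq
  | succ t =>
      have ht : t < rext L q := by exact_mod_cast (by push_cast at hs ⊢; omega : (t : ℤ) < (rext L q : ℤ))
      have := Nat.find_min (exists_out_right L q) ht
      rw [not_not] at this
      convert this using 2
      push_cast
      ring

lemma left_in {L : Finset (ℤ × ℤ)} {q : ℤ × ℤ} (hq : q ∈ L) :
    ∀ s : ℕ, (s : ℤ) ≤ (lext L q : ℤ) → (q.1 - (s : ℤ), q.2) ∈ L := by
  intro s hs
  cases s with
  | zero => simpa using hq
  | succ t =>
      have ht : t < lext L q := by exact_mod_cast (by push_cast at hs ⊢; omega : (t : ℤ) < (lext L q : ℤ))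
      have := Nat.find_min (exists_out_left L q) ht
      rw [not_not] at this
      convert this using 2
      push_cast
      ring

lemma mem_seg_iff {L : Finset (ℤ × ℤ)} {q p : ℤ × ℤ} :
    p ∈ seg L q ↔ p.2 = q.2 ∧ q.1 - (lext L q : ℤ) ≤ p.1 ∧ p.1 ≤ q.1 + (rext L q : ℤ) := by
  unfold seg
  rw [mem_Zrect]
  push_cast
  omega

lemma mem_seg_self (L : Finset (ℤ × ℤ)) (q : ℤ × ℤ) : q ∈ seg L q := by
  rw [mem_seg_iff]
  omega

lemma seg_subset {L : Finset (ℤ × ℤ)} {q : ℤ × ℤ} (hq : q ∈ L) : seg L q ⊆ L := by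
  intro p hp
  rw [mem_seg_iff] at hp
  obtain ⟨h2, hl, hr⟩ := hp
  rcases le_or_gt q.1 p.1 with h | h
  · have hp' : p = (q.1 + ((p.1 - q.1).toNat : ℤ), q.2) := Prod.ext (by omega) h2
    rw [hp']
    exact right_in hq _ (by omega)
  · have hp' : p = (q.1 - ((q.1 - p.1).toNat : ℤ), q.2) := Prod.ext (by omega) h2
    rw [hp']
    exact left_in hq _ (by omega)

lemma card_seg (L : Finset (ℤ × ℤ)) (q : ℤ × ℤ) :
    (seg L q).card = lext L q + rext L q + 1 := by
  unfold seg
  rw [card_Zrect, mul_one]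

lemma seg_card_pos (L : Finset (ℤ × ℤ)) (q : ℤ × ℤ) : 1 ≤ (seg L q).card := by
  rw [card_seg]; omega

lemma seg_window (L : Finset (ℤ × ℤ)) (q : ℤ × ℤ) :
    seg L q = Zrect ((seg L q).card) 1 (q.1 - (lext L q : ℤ), q.2) := by
  rw [card_seg]
  rfl

lemma window_subset_seg {L : Finset (ℤ × ℤ)} {k : ℕ} {c q : ℤ × ℤ}
    (hw : Zrect k 1 c ⊆ L) (hq : q ∈ Zrect k 1 c) : Zrect k 1 c ⊆ seg L q := by
  intro p hp
  rw [mem_Zrect] at hp hq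
  rw [mem_seg_iff]
  refine ⟨by omega, ?_, ?_⟩
  · by_contra hcon
    push_neg at hcon
    refine left_out L q (hw ?_)
    rw [mem_Zrect]
    constructor
    · omega
    · refine ⟨by omega, by omega, by omega⟩
  · by_contra hcon
    push_neg at hcon
    refine right_out L q (hw ?_)
    rw [mem_Zrect]
    constructor
    · omega
    · refine ⟨by omega, by omega, by omega⟩

lemma seg_eq_of_mem {L : Finset (ℤ × ℤ)} {q q' : ℤ × ℤ} (hq : q ∈ L) (hq' : q' ∈ seg L q) :
    seg L q' = seg L q := by
  have hrepr := seg_window L q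
  have h1 : seg L q ⊆ seg L q' := by
    rw [hrepr]
    exact window_subset_seg (by rw [← hrepr]; exact seg_subset hq) (by rw [← hrepr]; exact hq')
  have hq'L : q' ∈ L := seg_subset hq hq'
  have hrepr' := seg_window L q'
  have h2 : seg L q' ⊆ seg L q := by
    rw [hrepr']
    exact window_subset_seg (by rw [← hrepr']; exact seg_subset hq'L)
      (by rw [← hrepr']; exact h1 (mem_seg_self L q))
  exact Finset.Subset.antisymm h2 h1

lemma seg_disjoint {L : Finset (ℤ × ℤ)} {q q' : ℤ × ℤ} (hq : q ∈ L) (hq' : q' ∈ L)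
    (h : q' ∉ seg L q) : Disjoint (seg L q') (seg L q) := by
  rw [Finset.disjoint_left]
  intro r hr1 hr2
  have e1 := seg_eq_of_mem hq' hr1
  have e2 := seg_eq_of_mem hq hr2
  apply h
  have : q' ∈ seg L q' := mem_seg_self L q'
  rw [← e1, e2] at this
  exact this

lemma seg_sdiff {L : Finset (ℤ × ℤ)} {q0 q : ℤ × ℤ} (hq0 : q0 ∈ L) (hq : q ∈ L)
    (h : q ∉ seg L q0) : seg (L \ seg L q0) q = seg L q := by
  set S := seg L q0 with hS
  have hd : Disjoint (seg L q) S := seg_disjoint hq0 hq h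
  have hsub : seg L q ⊆ L \ S := Finset.subset_sdiff.mpr ⟨seg_subset hq, hd⟩
  have hqL' : q ∈ L \ S := Finset.mem_sdiff.mpr ⟨hq, h⟩
  have h1 : seg L q ⊆ seg (L \ S) q := by
    have hrepr := seg_window L q
    rw [hrepr]
    exact window_subset_seg (by rw [← hrepr]; exact hsub) (by rw [← hrepr]; exact mem_seg_self L q)
  have h2 : seg (L \ S) q ⊆ seg L q := by
    have hrepr := seg_window (L \ S) q
    rw [hrepr]
    exact window_subset_seg
      (by rw [← hrepr]; exact (seg_subset hqL').trans Finset.sdiff_subset)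
      (by rw [← hrepr]; exact mem_seg_self (L \ S) q)
  exact Finset.Subset.antisymm h2 h1

lemma hasHorizLength_iff {L : Finset (ℤ × ℤ)} {q : ℤ × ℤ} (hq : q ∈ L) (ℓ : ℕ) :
    HasHorizLength L q ℓ ↔ ℓ = (seg L q).card := by
  constructor
  · rintro ⟨h1, ⟨c, hqc, hcL⟩, hmax⟩
    have hsub := window_subset_seg hcL hqc
    have hle : ℓ ≤ (seg L q).card := by
      have := Finset.card_le_card hsub
      rwa [card_Zrect, mul_one] at this
    have hge : (seg L q).card ≤ ℓ := by
      by_contra hcon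
      push_neg at hcon
      exact hmax _ hcon ⟨(q.1 - (lext L q : ℤ), q.2),
        by rw [← seg_window]; exact mem_seg_self L q,
        by rw [← seg_window]; exact seg_subset hq⟩
    omega
  · rintro rfl
    refine ⟨seg_card_pos L q, ⟨(q.1 - (lext L q : ℤ), q.2),
      by rw [← seg_window]; exact mem_seg_self L q,
      by rw [← seg_window]; exact seg_subset hq⟩, ?_⟩
    rintro m' hm' ⟨c, hqc, hcL⟩
    have hsub := window_subset_seg hcL hqc
    have := Finset.card_le_card hsub
    rw [card_Zrect, mul_one] at this
    omega

lemma beta_split (m : ℕ) {L : Finset (ℤ × ℤ)} {q0 : ℤ × ℤ} (hq0 : q0 ∈ L) :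
    betaHoriz m L = betaHoriz m (L \ seg L q0) +
      (if (seg L q0).card = m then (seg L q0).card else 0) := by
  classical
  set S := seg L q0 with hS
  have hSL : S ⊆ L := seg_subset hq0
  unfold betaHoriz
  have key : L.filter (fun p => HasHorizLength L p m)
      = ((L \ S).filter (fun p => HasHorizLength L p m))
        ∪ (S.filter (fun p => HasHorizLength L p m)) := by
    rw [← Finset.filter_union, Finset.sdiff_union_of_subset hSL]
  rw [key,
    Finset.card_union_of_disjoint (Finset.disjoint_filter_filter Finset.sdiff_disjoint)]
  congr 1
  · apply congrArg Finset.card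
    apply Finset.filter_congr
    intro q hq
    have hqL : q ∈ L := (Finset.mem_sdiff.mp hq).1
    have hqS : q ∉ S := (Finset.mem_sdiff.mp hq).2
    rw [hasHorizLength_iff hqL, hasHorizLength_iff hq, seg_sdiff hq0 hqL hqS]
  · have hiff : ∀ q ∈ S, HasHorizLength L q m ↔ m = S.card := by
      intro q hqS
      rw [hasHorizLength_iff (hSL hqS), seg_eq_of_mem hq0 hqS]
    by_cases hc : S.card = m
    · rw [Finset.filter_true_of_mem (fun q hq => (hiff q hq).mpr hc.symm), if_pos hc]
    · rw [Finset.filter_false_of_mem (fun q hq hH => hc ((hiff q hq).mp hH).symm), if_neg hc,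
        Finset.card_empty]

/-! ### Counting patterns of `Um` -/

lemma ncard_prod_set {α β : Type*} (A : Set α) (B : Set β) :
    (A ×ˢ B).ncard = A.ncard * B.ncard := by
  rw [← Nat.card_coe_set_eq, ← Nat.card_coe_set_eq, ← Nat.card_coe_set_eq,
    Nat.card_congr (Equiv.Set.prod A B), Nat.card_prod]

lemma count_mul (m : ℕ) {L : Finset (ℤ × ℤ)} {q0 : ℤ × ℤ} (hq0 : q0 ∈ L) :
    patternCount (Um m) (seg L q0) * patternCount (Um m) (L \ seg L q0) ≤
      patternCount (Um m) L := by
  classical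
  set S := seg L q0 with hS
  set L' := L \ S with hL'
  have hSL : S ⊆ L := seg_subset hq0
  set resS := fun x : (ℤ × ℤ) → Fin 2 => fun p : S => x (p : ℤ × ℤ) with hresS
  set resL' := fun x : (ℤ × ℤ) → Fin 2 => fun p : L' => x (p : ℤ × ℤ) with hresL'
  set resL := fun x : (ℤ × ℤ) → Fin 2 => fun p : L => x (p : ℤ × ℤ) with hresL
  set A := resS '' Um m with hA
  set B := resL' '' Um m with hB
  have key : ∀ ab : (S → Fin 2) × (L' → Fin 2), ab ∈ A ×ˢ B →
      ∃ x ∈ Um m, resS x = ab.1 ∧ resL' x = ab.2 := by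
    rintro ⟨a, b⟩ hab
    obtain ⟨⟨y, hy, rfl⟩, ⟨z, hz, rfl⟩⟩ := Set.mem_prod.mp hab
    set x : (ℤ × ℤ) → Fin 2 :=
      fun q => if hq : q ∈ S then y q else if hq' : q ∈ L' then z q else 0 with hx
    have hxS : ∀ q : ℤ × ℤ, q ∈ S → x q = y q := fun q hq => dif_pos hq
    have hxL' : ∀ q : ℤ × ℤ, q ∈ L' → x q = z q := fun q hq => by
      have hqS : q ∉ S := (Finset.mem_sdiff.mp hq).2
      simp only [hx, dif_neg hqS, dif_pos hq]
    have hxout : ∀ q : ℤ × ℤ, q ∉ L → x q = 0 := fun q hq => by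
      have h1 : q ∉ S := fun hc => hq (hSL hc)
      have h2 : q ∉ L' := fun hc => hq ((Finset.mem_sdiff.mp hc).1)
      simp only [hx, dif_neg h1, dif_neg h2]
    refine ⟨x, ?_, funext fun p => hxS p p.2, funext fun p => hxL' p p.2⟩
    intro p
    by_contra hcon
    push_neg at hcon
    have hmemL : ∀ k : ℕ, k ≤ m → (p.1 + (k : ℤ), p.2) ∈ L := by
      intro k hk
      by_contra hout
      exact hcon k hk (hxout _ hout)
    have hwin : Zrect (m + 1) 1 p ⊆ L := by
      intro r hr
      rw [mem_Zrect] at hr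
      have : r = (p.1 + ((r.1 - p.1).toNat : ℤ), p.2) := Prod.ext (by omega) (by omega)
      rw [this]
      exact hmemL _ (by omega)
    have hpwin : p ∈ Zrect (m + 1) 1 p := by rw [mem_Zrect]; push_cast; omega
    have hpL : p ∈ L := hwin hpwin
    have hsubseg : Zrect (m + 1) 1 p ⊆ seg L p := window_subset_seg hwin hpwin
    by_cases hpS : p ∈ S
    · have hsegeq : seg L p = S := seg_eq_of_mem hq0 hpS
      obtain ⟨k, hk, hy0⟩ := hy p
      have hrS : (p.1 + (k : ℤ), p.2) ∈ S := by
        rw [← hsegeq]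
        exact hsubseg (by rw [mem_Zrect]; push_cast; omega)
      exact hcon k hk (by rw [hxS _ hrS]; exact hy0)
    · have hdisj : Disjoint (seg L p) S := seg_disjoint hq0 hpL hpS
      obtain ⟨k, hk, hz0⟩ := hz p
      have hrwin : (p.1 + (k : ℤ), p.2) ∈ Zrect (m + 1) 1 p := by
        rw [mem_Zrect]; push_cast; omega
      have hrL' : (p.1 + (k : ℤ), p.2) ∈ L' := by
        rw [hL', Finset.mem_sdiff]
        exact ⟨hwin hrwin, Finset.disjoint_left.mp hdisj (hsubseg hrwin)⟩
      exact hcon k hk (by rw [hxL' _ hrL']; exact hz0)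
  choose! xc hxc1 hxc2 hxc3 using key
  set Φ := fun ab : (S → Fin 2) × (L' → Fin 2) => resL (xc ab) with hΦ
  have hsub2 : Φ '' (A ×ˢ B) ⊆ resL '' Um m := by
    rintro _ ⟨ab, hab, rfl⟩
    exact ⟨xc ab, hxc1 ab hab, rfl⟩
  have hinj : Set.InjOn Φ (A ×ˢ B) := by
    intro ab hab cd hcd h
    have h1 : ∀ ef, ef ∈ A ×ˢ B → ∀ p : (ℤ × ℤ), ∀ hp : p ∈ S, ef.1 ⟨p, hp⟩ = Φ ef ⟨p, hSL hp⟩ := by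
      intro ef hef p hp
      rw [← hxc2 ef hef]
    have h2 : ∀ ef, ef ∈ A ×ˢ B → ∀ p : (ℤ × ℤ), ∀ hp : p ∈ L',
        ef.2 ⟨p, hp⟩ = Φ ef ⟨p, (Finset.mem_sdiff.mp hp).1⟩ := by
      intro ef hef p hp
      rw [← hxc3 ef hef]
    refine Prod.ext ?_ ?_
    · funext p
      rw [h1 ab hab p p.2, h1 cd hcd p p.2, h]
    · funext p
      rw [h2 ab hab p p.2, h2 cd hcd p p.2, h]
  have hcalc : (A ×ˢ B).ncard ≤ (resL '' Um m).ncard := by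
    rw [← Set.ncard_image_of_injOn hinj]
    exact Set.ncard_le_ncard hsub2 (Set.toFinite _)
  rw [ncard_prod_set] at hcalc
  exact hcalc

/-- On a window of exactly `m` points, the SFT `Um m` shows all `2^m` patterns. -/
lemma count_free (m : ℕ) (k : ℕ) (hk : k ≤ m) (c : ℤ × ℤ) :
    2 ^ k ≤ patternCount (Um m) (Zrect k 1 c) := by
  classical
  set W := Zrect k 1 c with hW
  have hcard : W.card = k := by rw [hW, card_Zrect, mul_one]
  have : (fun x : (ℤ × ℤ) → Fin 2 => fun p : W => x (p : ℤ × ℤ)) '' Um m = Set.univ := by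
    apply Set.eq_univ_of_forall
    intro f
    set x : (ℤ × ℤ) → Fin 2 := fun q => if hq : q ∈ W then f ⟨q, hq⟩ else 0 with hx
    have hxU : x ∈ Um m := by
      intro p
      by_contra hcon
      push_neg at hcon
      have hmemW : ∀ j : ℕ, j ≤ m → (p.1 + (j : ℤ), p.2) ∈ W := by
        intro j hj
        by_contra hout
        exact hcon j hj (by simp only [hx, dif_neg hout])
      have hsub : Zrect (m + 1) 1 p ⊆ W := by
        intro r hr
        rw [mem_Zrect] at hr
        have : r = (p.1 + ((r.1 - p.1).toNat : ℤ), p.2) := Prod.ext (by omega) (by omega)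
        rw [this]
        exact hmemW _ (by omega)
      have := Finset.card_le_card hsub
      rw [card_Zrect, mul_one, hcard] at this
      omega
    exact ⟨x, hxU, funext fun p => dif_pos p.2⟩
  unfold patternCount
  rw [this, Set.ncard_univ, Nat.card_eq_fintype_card]
  simp [hcard]

/-- Any maximal segment's pattern count equals that of a standard window. -/
lemma count_seg_eq (m : ℕ) (L : Finset (ℤ × ℤ)) (q : ℤ × ℤ) :
    patternCount (Um m) (seg L q) = patternCount (Um m) (Zrect ((seg L q).card) 1 (0, 0)) := by
  conv_lhs => rw [seg_window L q]
  rw [← Zrect_image_add ((seg L q).card) 1 (q.1 - (lext L q : ℤ), q.2)]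
  exact patternCount_image_add (Um_shift m) _ _

/-! ### Rectangular entropy bounds -/

lemma rect_term_nonneg {U : Set ((ℤ × ℤ) → Fin 2)} (hU : U.Nonempty) (mn : ℕ × ℕ) :
    0 ≤ (1 / (((mn.1 + 1) * (mn.2 + 1) : ℕ) : ℝ)) *
      Real.log (patternCount U (Zrect (mn.1 + 1) (mn.2 + 1) (0, 0))) := by
  apply mul_nonneg
  · positivity
  · apply Real.log_nonneg
    exact_mod_cast patternCount_pos hU _

lemma rectEntropy_nonneg {U : Set ((ℤ × ℤ) → Fin 2)} (hU : U.Nonempty) : 0 ≤ rectEntropy U :=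
  le_ciInf (rect_term_nonneg hU)

lemma rectEntropy_le {U : Set ((ℤ × ℤ) → Fin 2)} (hU : U.Nonempty) (a b : ℕ) :
    rectEntropy U ≤ (1 / (((a + 1) * (b + 1) : ℕ) : ℝ)) *
      Real.log (patternCount U (Zrect (a + 1) (b + 1) (0, 0))) :=
  ciInf_le ⟨0, fun _ ⟨mn, hmn⟩ => hmn ▸ rect_term_nonneg hU mn⟩ (a, b)

lemma rectEntropy_le_row {U : Set ((ℤ × ℤ) → Fin 2)} (hU : U.Nonempty) {ℓ : ℕ} (hℓ : 1 ≤ ℓ) :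
    (ℓ : ℝ) * rectEntropy U ≤ Real.log (patternCount U (Zrect ℓ 1 (0, 0))) := by
  obtain ⟨a, rfl⟩ : ∃ a, ℓ = a + 1 := ⟨ℓ - 1, by omega⟩
  have h := rectEntropy_le hU a 0
  have hpos : (0 : ℝ) < ((a : ℝ) + 1) := by positivity
  rw [show (a + 1) * (0 + 1) = a + 1 by ring] at h
  push_cast at h ⊢
  rw [div_mul_eq_mul_div, le_div_iff₀ hpos, one_mul] at h
  linarith [h]

/-! ### The main counting bound -/

lemma main_bound (m : ℕ) (L : Finset (ℤ × ℤ)) :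
    (betaHoriz m L : ℝ) * Real.log 2 +
      ((L.card : ℝ) - (betaHoriz m L : ℝ)) * rectEntropy (Um m) ≤
      Real.log (patternCount (Um m) L) := by
  induction L using Finset.strongInduction with
  | _ L IH =>
    rcases L.eq_empty_or_nonempty with rfl | ⟨q0, hq0⟩
    · have h1 := patternCount_pos (Um_nonempty m) (∅ : Finset (ℤ × ℤ))
      simp only [betaHoriz, Finset.filter_empty, Finset.card_empty, Nat.cast_zero, zero_mul,
        sub_zero, mul_zero, add_zero, zero_add, zero_sub, neg_zero]
      exact Real.log_nonneg (by exact_mod_cast h1)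
    · set S := seg L q0 with hSdef
      set L' := L \ S with hL'def
      have hSL : S ⊆ L := seg_subset hq0
      have hS1 : 1 ≤ S.card := seg_card_pos L q0
      have hss : L' ⊂ L := Finset.sdiff_ssubset hSL (Finset.card_pos.mp hS1)
      have IH' := IH L' hss
      have hc1 : 1 ≤ patternCount (Um m) S := patternCount_pos (Um_nonempty m) S
      have hc2 : 1 ≤ patternCount (Um m) L' := patternCount_pos (Um_nonempty m) L'
      have hmul := count_mul m hq0
      have hlog : Real.log (patternCount (Um m) S) + Real.log (patternCount (Um m) L') ≤
          Real.log (patternCount (Um m) L) := by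
        rw [← Real.log_mul (by positivity : ((patternCount (Um m) S : ℝ)) ≠ 0)
          (by positivity : ((patternCount (Um m) L' : ℝ)) ≠ 0)]
        apply Real.log_le_log (by positivity)
        exact_mod_cast hmul
      have hrow : (S.card : ℝ) * rectEntropy (Um m) ≤ Real.log (patternCount (Um m) S) := by
        rw [count_seg_eq m L q0, ← hSdef]
        exact rectEntropy_le_row (Um_nonempty m) hS1
      have hfree : S.card = m → (m : ℝ) * Real.log 2 ≤ Real.log (patternCount (Um m) S) := by
        intro hcm
        rw [count_seg_eq m L q0, ← hSdef, hcm]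
        calc (m : ℝ) * Real.log 2 = Real.log ((2 : ℝ) ^ m) := by rw [Real.log_pow]
          _ ≤ _ := by
              apply Real.log_le_log (by positivity)
              exact_mod_cast count_free m m le_rfl (0, 0)
      have hb := beta_split m hq0
      rw [← hSdef, ← hL'def] at hb
      have hcard : L'.card + S.card = L.card := Finset.card_sdiff_add_card_eq_card hSL
      rcases eq_or_ne S.card m with hcm | hcm
      · rw [hb, if_pos hcm]
        have hfree' := hfree hcm
        push_cast
        have hc : (L.card : ℝ) = (L'.card : ℝ) + (S.card : ℝ) := by exact_mod_cast hcard.symm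
        rw [hc, hcm]
        push_cast
        linarith [IH', hlog, hfree']
      · rw [hb, if_neg hcm]
        push_cast
        have hc : (L.card : ℝ) = (L'.card : ℝ) + (S.card : ℝ) := by exact_mod_cast hcard.symm
        rw [hc]
        linarith [IH', hlog, hrow]

/-! ### `rectEntropy (Um m) < log 2` -/

lemma count_window_lt (m : ℕ) :
    patternCount (Um m) (Zrect (m + 1) 1 (0, 0)) < 2 ^ (m + 1) := by
  classical
  set W := Zrect (m + 1) 1 (0, 0) with hW
  have hcard : W.card = m + 1 := by rw [hW, card_Zrect, mul_one]
  have hsub : (fun x : (ℤ × ℤ) → Fin 2 => fun p : W => x (p : ℤ × ℤ)) '' Um m ⊆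
      Set.univ \ {fun _ => 1} := by
    rintro _ ⟨x, hx, rfl⟩
    refine ⟨Set.mem_univ _, ?_⟩
    obtain ⟨k, hk, h0⟩ := hx (0, 0)
    have hmem : ((k : ℤ), (0 : ℤ)) ∈ W := by rw [hW, mem_Zrect]; simp; omega
    intro hcon
    have := congrFun hcon ⟨((k : ℤ), (0 : ℤ)), hmem⟩
    simp only at this
    rw [show ((k : ℤ), (0 : ℤ)) = ((0 : ℤ) + (k : ℤ), (0 : ℤ)) by norm_num] at this
    rw [h0] at this
    exact absurd this (by decide)
  have h1 : patternCount (Um m) W ≤ (Set.univ \ {fun _ => 1} : Set (W → Fin 2)).ncard :=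
    Set.ncard_le_ncard hsub (Set.toFinite _)
  have h2 : (Set.univ \ {fun _ => 1} : Set (W → Fin 2)).ncard =
      Fintype.card (W → Fin 2) - 1 := by
    rw [Set.ncard_diff_singleton_of_mem (Set.mem_univ _), Set.ncard_univ,
      Nat.card_eq_fintype_card]
  have h3 : Fintype.card (W → Fin 2) = 2 ^ (m + 1) := by
    rw [Fintype.card_fun]
    simp [hcard]
  have hpos : 1 ≤ patternCount (Um m) W := patternCount_pos (Um_nonempty m) W
  omega

lemma rectEntropy_lt_log2 (m : ℕ) : rectEntropy (Um m) < Real.log 2 := by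
  have hle := rectEntropy_le (Um_nonempty m) m 0
  rw [show (m + 1) * (0 + 1) = m + 1 by ring] at hle
  have hc1 : 1 ≤ patternCount (Um m) (Zrect (m + 1) 1 (0, 0)) :=
    patternCount_pos (Um_nonempty m) _
  have hlt : Real.log (patternCount (Um m) (Zrect (m + 1) 1 (0, 0))) <
      Real.log ((2 : ℝ) ^ (m + 1)) := by
    apply Real.log_lt_log (by exact_mod_cast hc1)
    exact_mod_cast count_window_lt m
  have hpos : (0 : ℝ) < ((m + 1 : ℕ) : ℝ) := by positivity
  calc rectEntropy (Um m) ≤ _ := hle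
    _ < (1 / ((m + 1 : ℕ) : ℝ)) * Real.log ((2 : ℝ) ^ (m + 1)) := by
        apply mul_lt_mul_of_pos_left hlt (by positivity)
    _ = Real.log 2 := by
        rw [Real.log_pow]
        field_simp

/-! ### The core estimate -/

lemma core (m : ℕ) (Ω : ℕ → Finset (ℤ × ℤ)) (hΩ : IsExpandingSystem Ω)
    (hpos : 0 < Filter.limsup (fun n => (betaHoriz m (Ω n) : ℝ) / ((Ω n).card : ℝ)) Filter.atTop) :
    rectEntropy (Um m) < entropyAlong (Um m) Ω := by
  classical
  set h := rectEntropy (Um m) with hh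
  set g := fun n => (betaHoriz m (Ω n) : ℝ) / ((Ω n).card : ℝ) with hg
  set f := fun n => (1 / ((Ω n).card : ℝ)) * Real.log (patternCount (Um m) (Ω n)) with hf
  have hcard : ∀ n, n ≤ (Ω n).card := by
    intro n
    induction n with
    | zero => exact Nat.zero_le _
    | succ k ih => have := Finset.card_lt_card (hΩ.1 k); omega
  have hβle : ∀ n, betaHoriz m (Ω n) ≤ (Ω n).card := fun n => Finset.card_filter_le _ _
  have hg0 : ∀ n, 0 ≤ g n := fun n => by positivity
  have h2 : h < Real.log 2 := rectEntropy_lt_log2 m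
  have hev : ∀ n, 1 ≤ n → h + (Real.log 2 - h) * g n ≤ f n := by
    intro n hn
    have hcpos : (0 : ℝ) < ((Ω n).card : ℝ) := by
      have := lt_of_lt_of_le hn (hcard n); exact_mod_cast this
    have hmb := main_bound m (Ω n)
    have heq : h + (Real.log 2 - h) * g n =
        (1 / ((Ω n).card : ℝ)) * ((betaHoriz m (Ω n) : ℝ) * Real.log 2 +
          (((Ω n).card : ℝ) - (betaHoriz m (Ω n) : ℝ)) * h) := by
      rw [hg]
      field_simp
      ring
    rw [heq, hf]
    exact mul_le_mul_of_nonneg_left hmb (by positivity)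
  have hcob : Filter.IsCoboundedUnder (· ≤ ·) Filter.atTop g :=
    Filter.isCoboundedUnder_le_of_le Filter.atTop hg0
  set δ := Filter.limsup g Filter.atTop with hδ
  have hfreq : ∃ᶠ n in Filter.atTop, δ / 2 < g n :=
    Filter.frequently_lt_of_lt_limsup hcob (by linarith)
  have hfreq2 : ∃ᶠ n in Filter.atTop, h + (Real.log 2 - h) * (δ / 2) ≤ f n := by
    apply (hfreq.and_eventually (Filter.eventually_atTop.mpr ⟨1, hev⟩)).mono
    rintro n ⟨ha, hb⟩
    have : h + (Real.log 2 - h) * (δ / 2) ≤ h + (Real.log 2 - h) * g n := by nlinarith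
    linarith
  have hfbdd : Filter.IsBoundedUnder (· ≤ ·) Filter.atTop f := by
    apply Filter.isBoundedUnder_of
    refine ⟨Real.log 2, fun n => ?_⟩
    rcases Nat.eq_zero_or_pos (Ω n).card with hc | hc
    · rw [hf]
      simp only [hc, Nat.cast_zero, div_zero, zero_mul]
      positivity
    · have hcpos : (0 : ℝ) < ((Ω n).card : ℝ) := by exact_mod_cast hc
      have hcount : 1 ≤ patternCount (Um m) (Ω n) := patternCount_pos (Um_nonempty m) _
      have hlog : Real.log (patternCount (Um m) (Ω n)) ≤ ((Ω n).card : ℝ) * Real.log 2 := by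
        rw [← Real.log_pow]
        apply Real.log_le_log (by exact_mod_cast hcount)
        exact_mod_cast patternCount_le (Um m) (Ω n)
      show 1 / ((Ω n).card : ℝ) * Real.log (patternCount (Um m) (Ω n)) ≤ Real.log 2
      rw [div_mul_eq_mul_div, div_le_iff₀ hcpos]
      linarith
  have hlim := Filter.le_limsup_of_frequently_le hfreq2 hfbdd
  have hgain : 0 < (Real.log 2 - h) * (δ / 2) := mul_pos (by linarith) (by linarith)
  have : h < Filter.limsup f Filter.atTop := by linarith
  exact this

/-! ### Transposition: the vertical case -/

lemma hasVert_iff_horiz (L : Finset (ℤ × ℤ)) (p : ℤ × ℤ) (ℓ : ℕ) :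
    HasVertLength L p ℓ ↔ HasHorizLength (L.image Prod.swap) p.swap ℓ := by
  have key : ∀ (k : ℕ), (∃ c, p ∈ Zrect 1 k c ∧ Zrect 1 k c ⊆ L) ↔
      (∃ c, p.swap ∈ Zrect k 1 c ∧ Zrect k 1 c ⊆ L.image Prod.swap) := by
    intro k
    constructor
    · rintro ⟨c, h1, h2⟩
      refine ⟨c.swap, ?_, ?_⟩
      · rw [← Zrect_image_swap]
        exact Finset.mem_image_of_mem _ h1
      · rw [← Zrect_image_swap]
        exact Finset.image_subset_image h2
    · rintro ⟨c, h1, h2⟩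
      refine ⟨c.swap, ?_, ?_⟩
      · have := Finset.mem_image_of_mem Prod.swap h1
        rw [Zrect_image_swap] at this
        simpa using this
      · have := Finset.image_subset_image (f := Prod.swap) h2
        rw [Zrect_image_swap, Finset.image_image] at this
        have heq : (Prod.swap ∘ Prod.swap : ℤ × ℤ → ℤ × ℤ) = id := by
          funext q; simp
        rwa [heq, Finset.image_id] at this
  unfold HasVertLength HasHorizLength
  simp only [key]

lemma betaVert_eq_swap (m : ℕ) (L : Finset (ℤ × ℤ)) :
    betaVert m L = betaHoriz m (L.image Prod.swap) := by
  classical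
  unfold betaVert betaHoriz
  have himg : (L.image Prod.swap).filter (fun p => HasHorizLength (L.image Prod.swap) p m)
      = (L.filter (fun p => HasVertLength L p m)).image Prod.swap := by
    ext q
    simp only [Finset.mem_filter, Finset.mem_image]
    constructor
    · rintro ⟨hq, hH⟩
      obtain ⟨p, hp, rfl⟩ := hq
      exact ⟨p, ⟨hp, (hasVert_iff_horiz L p m).mpr hH⟩, rfl⟩
    · rintro ⟨p, ⟨hp, hV⟩, rfl⟩
      exact ⟨⟨p, hp, rfl⟩, (hasVert_iff_horiz L p m).mp hV⟩
  rw [himg, Finset.card_image_of_injective _ Prod.swap_injective]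

lemma expanding_swap {Ω : ℕ → Finset (ℤ × ℤ)} (hΩ : IsExpandingSystem Ω) :
    IsExpandingSystem (fun n => (Ω n).image Prod.swap) := by
  constructor
  · intro n
    exact (Finset.image_ssubset_image Prod.swap_injective).mpr (hΩ.1 n)
  · intro p
    obtain ⟨n, hn⟩ := hΩ.2 p.swap
    exact ⟨n, by simpa using Finset.mem_image_of_mem Prod.swap hn⟩

lemma count_swap (m : ℕ) (L : Finset (ℤ × ℤ)) :
    patternCount (UmV m) L = patternCount (Um m) (L.image Prod.swap) := by
  rw [← UmV_eq_image, patternCount_comp]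

lemma entropyAlong_swap (m : ℕ) (Ω : ℕ → Finset (ℤ × ℤ)) :
    entropyAlong (UmV m) Ω = entropyAlong (Um m) (fun n => (Ω n).image Prod.swap) := by
  unfold entropyAlong
  congr 1
  funext n
  rw [count_swap, Finset.card_image_of_injective _ Prod.swap_injective]

lemma rect_le_swap (m : ℕ) : rectEntropy (UmV m) ≤ rectEntropy (Um m) := by
  apply le_ciInf
  intro mn
  calc rectEntropy (UmV m)
      ≤ (1 / (((mn.2 + 1) * (mn.1 + 1) : ℕ) : ℝ)) *
        Real.log (patternCount (UmV m) (Zrect (mn.2 + 1) (mn.1 + 1) (0, 0))) :=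
        rectEntropy_le (UmV_nonempty m) mn.2 mn.1
    _ = (1 / (((mn.1 + 1) * (mn.2 + 1) : ℕ) : ℝ)) *
        Real.log (patternCount (Um m) (Zrect (mn.1 + 1) (mn.2 + 1) (0, 0))) := by
        rw [count_swap, Zrect_image_swap, Nat.mul_comm]
        norm_num


end SFTAux


/-- Theorem 1.3 / 4.1: if a positive proportion of points of `Ω(n)` have
horizontal (or vertical) length `m`, then some additive SFT `U ⊂ {0,1}^{ℤ²}` satisfies
`h_Ω(U) > h_r(U)`. -/
theorem exists_SFT_entropyAlong_gt_rectEntropy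
    (Ω : ℕ → Finset (ℤ × ℤ)) (hΩ : IsExpandingSystem Ω)
    (hlen : ∃ m : ℕ, 1 ≤ m ∧
      (0 < Filter.limsup (fun n => (betaHoriz m (Ω n) : ℝ) / ((Ω n).card : ℝ)) Filter.atTop ∨
        0 < Filter.limsup (fun n => (betaVert m (Ω n) : ℝ) / ((Ω n).card : ℝ)) Filter.atTop)) :
    ∃ U : Set ((ℤ × ℤ) → Fin 2), IsShiftSpace U ∧ IsSFT U ∧
      rectEntropy U < entropyAlong U Ω := by
  obtain ⟨m, hm, hcase⟩ := hlen
  rcases hcase with hH | hV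
  · exact ⟨SFTAux.Um m, SFTAux.Um_isShiftSpace m, SFTAux.Um_isSFT m, SFTAux.core m Ω hΩ hH⟩
  · refine ⟨SFTAux.UmV m, SFTAux.UmV_isShiftSpace m, SFTAux.UmV_isSFT m, ?_⟩
    set Ω' := fun n => (Ω n).image Prod.swap with hΩ'
    have hexp := SFTAux.expanding_swap hΩ
    have hβ : (fun n => (betaVert m (Ω n) : ℝ) / ((Ω n).card : ℝ))
        = fun n => (betaHoriz m (Ω' n) : ℝ) / ((Ω' n).card : ℝ) := by
      funext n
      rw [hΩ']
      rw [SFTAux.betaVert_eq_swap, Finset.card_image_of_injective _ Prod.swap_injective]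
    rw [hβ] at hV
    have hcore := SFTAux.core m Ω' hexp hV
    calc rectEntropy (SFTAux.UmV m) ≤ rectEntropy (SFTAux.Um m) := SFTAux.rect_le_swap m
      _ < entropyAlong (SFTAux.Um m) Ω' := hcore
      _ = entropyAlong (SFTAux.UmV m) Ω := (SFTAux.entropyAlong_swap m Ω).symm
end

section
/- For the horizontal golden-mean shift U_B and every nonempty finite set L ⊂ ℤ², Γ(L, U_B) ≥ g^{|L|}, equivalently (1/|L|) log Γ(L, U_B) ≥ log g, where g = (1+√5)/2. -/
open Filter
open scoped Classical

noncomputable def indepSets (L : Finset (ℤ × ℤ)) : Finset (Finset (ℤ × ℤ)) :=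
  L.powerset.filter (fun S => ∀ p ∈ S, ((p.1 + 1, p.2) : ℤ × ℤ) ∉ S)

lemma mem_indepSets {L S : Finset (ℤ × ℤ)} :
    S ∈ indepSets L ↔ S ⊆ L ∧ ∀ p ∈ S, ((p.1 + 1, p.2) : ℤ × ℤ) ∉ S := by
  simp [indepSets]

lemma indepSets_mono {L L' S : Finset (ℤ × ℤ)} (h : L' ⊆ L) (hS : S ∈ indepSets L') :
    S ∈ indepSets L := by
  rw [mem_indepSets] at *
  exact ⟨hS.1.trans h, hS.2⟩

lemma insert_mem_indepSets {L S : Finset (ℤ × ℤ)} {p : ℤ × ℤ}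
    (hp : p ∈ L) (hr : ((p.1 + 1, p.2) : ℤ × ℤ) ∉ L)
    (hS : S ∈ indepSets L) (hpS : p ∉ S) (hq : ((p.1 - 1, p.2) : ℤ × ℤ) ∉ S) :
    insert p S ∈ indepSets L := by
  obtain ⟨p1, p2⟩ := p
  rw [mem_indepSets] at *
  refine ⟨Finset.insert_subset hp hS.1, ?_⟩
  intro r hrmem
  rcases Finset.mem_insert.1 hrmem with rfl | hrS
  · intro hcon
    rcases Finset.mem_insert.1 hcon with heq | hmem
    · have : p1 + 1 = p1 := congrArg Prod.fst heq
      omega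
    · exact hr (hS.1 hmem)
  · intro hcon
    rcases Finset.mem_insert.1 hcon with heq | hmem
    · apply hq
      obtain ⟨r1, r2⟩ := r
      obtain ⟨h1, h2⟩ := Prod.mk.injEq .. |>.mp heq
      have : (r1, r2) = ((p1 : ℤ) - 1, p2) := by rw [Prod.mk.injEq]; omega
      rwa [this] at hrS
    · exact hS.2 r hrS hmem

lemma indepSets_card_rec {L : Finset (ℤ × ℤ)} {p : ℤ × ℤ}
    (hp : p ∈ L) (hr : ((p.1 + 1, p.2) : ℤ × ℤ) ∉ L) :
    (indepSets (L.erase p)).card +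
      (indepSets ((L.erase p).erase (p.1 - 1, p.2))).card ≤ (indepSets L).card := by
  set q : ℤ × ℤ := (p.1 - 1, p.2) with hqdef
  set A1 := indepSets (L.erase p)
  set A2 := (indepSets ((L.erase p).erase q)).image (insert p)
  have hsub : A1 ∪ A2 ⊆ indepSets L := by
    intro S hS
    rcases Finset.mem_union.1 hS with h | h
    · exact indepSets_mono (Finset.erase_subset _ _) h
    · obtain ⟨T, hT, rfl⟩ := Finset.mem_image.1 h
      have hTL : T ∈ indepSets L :=
        indepSets_mono ((Finset.erase_subset _ _).trans (Finset.erase_subset _ _)) hT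
      have hTsub : T ⊆ (L.erase p).erase q := (mem_indepSets.1 hT).1
      have hpT : p ∉ T := fun hc => (Finset.mem_erase.1 ((Finset.erase_subset _ _) (hTsub hc))).1 rfl
      have hqT : q ∉ T := fun hc => (Finset.mem_erase.1 (hTsub hc)).1 rfl
      exact insert_mem_indepSets hp hr hTL hpT hqT
  have hdisj : Disjoint A1 A2 := by
    rw [Finset.disjoint_left]
    intro S hS1 hS2
    have hpS : p ∉ S := fun hc =>
      (Finset.mem_erase.1 ((mem_indepSets.1 hS1).1 hc)).1 rfl
    obtain ⟨T, hT, rfl⟩ := Finset.mem_image.1 hS2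
    exact hpS (Finset.mem_insert_self _ _)
  have hA2card : A2.card = (indepSets ((L.erase p).erase q)).card := by
    apply Finset.card_image_of_injOn
    intro S hS T hT hST
    have hpS : p ∉ S := fun hc =>
      (Finset.mem_erase.1 ((Finset.erase_subset _ _) ((mem_indepSets.1 hS).1 hc))).1 rfl
    have hpT : p ∉ T := fun hc =>
      (Finset.mem_erase.1 ((Finset.erase_subset _ _) ((mem_indepSets.1 hT).1 hc))).1 rfl
    have := congrArg (Finset.erase · p) hST
    simpa [Finset.erase_insert hpS, Finset.erase_insert hpT] using this
  calc A1.card + (indepSets ((L.erase p).erase q)).card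
      = A1.card + A2.card := by rw [hA2card]
    _ = (A1 ∪ A2).card := (Finset.card_union_of_disjoint hdisj).symm
    _ ≤ (indepSets L).card := Finset.card_le_card hsub

lemma indepSets_card_le_patternCount (L : Finset (ℤ × ℤ)) :
    (indepSets L).card ≤ patternCount goldenMeanShift L := by
  classical
  set f : Finset (ℤ × ℤ) → (L → Fin 2) :=
    fun S => fun p => if (p : ℤ × ℤ) ∈ S then 1 else 0 with hf
  have hinj : Set.InjOn f (indepSets L) := by
    intro S hS T hT hST
    have hSL : S ⊆ L := (mem_indepSets.1 hS).1
    have hTL : T ⊆ L := (mem_indepSets.1 hT).1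
    ext a
    constructor
    · intro ha
      have := congrFun hST ⟨a, hSL ha⟩
      simp only [hf, ha, if_true] at this
      by_contra hna
      simp [hna] at this
    · intro ha
      have := congrFun hST ⟨a, hTL ha⟩
      simp only [hf, ha, if_true] at this
      by_contra hna
      simp [hna] at this
  have himg : ((indepSets L).image f : Set (L → Fin 2)) ⊆
      ((fun x => fun p : L => x (p : ℤ × ℤ)) '' goldenMeanShift) := by
    intro g hg
    simp only [Finset.coe_image, Set.mem_image, Finset.mem_coe] at hg
    obtain ⟨S, hS, rfl⟩ := hg
    refine ⟨fun p => if p ∈ S then 1 else 0, ?_, rfl⟩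
    intro p
    by_cases hpS : p ∈ S
    · have : ((p.1 + 1, p.2) : ℤ × ℤ) ∉ S := (mem_indepSets.1 hS).2 p hpS
      simp [hpS, this]
    · simp [hpS]
  have h1 : ((indepSets L).image f).card ≤ patternCount goldenMeanShift L := by
    rw [patternCount, ← Set.ncard_coe_finset]
    exact Set.ncard_le_ncard himg (Set.toFinite _)
  calc (indepSets L).card = ((indepSets L).image f).card :=
        (Finset.card_image_of_injOn (by exact_mod_cast hinj)).symm
    _ ≤ _ := h1

lemma goldenFacts : (1 : ℝ) ≤ (1 + Real.sqrt 5) / 2 ∧ (1 + Real.sqrt 5) / 2 ≤ 2 ∧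
    ((1 + Real.sqrt 5) / 2) ^ 2 = (1 + Real.sqrt 5) / 2 + 1 := by
  have h5 : Real.sqrt 5 ^ 2 = 5 := Real.sq_sqrt (by norm_num)
  have hnn : 0 ≤ Real.sqrt 5 := Real.sqrt_nonneg 5
  refine ⟨by nlinarith, by nlinarith, by nlinarith⟩

lemma exists_rightmost {L : Finset (ℤ × ℤ)} (hL : L.Nonempty) :
    ∃ p ∈ L, ((p.1 + 1, p.2) : ℤ × ℤ) ∉ L := by
  obtain ⟨r, hr⟩ := hL
  have hrow : (L.filter (fun x => x.2 = r.2)).Nonempty :=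
    ⟨r, Finset.mem_filter.2 ⟨hr, rfl⟩⟩
  obtain ⟨p, hp, hmax⟩ := Finset.exists_max_image _ (fun x => x.1) hrow
  obtain ⟨hpL, hp2⟩ := Finset.mem_filter.1 hp
  refine ⟨p, hpL, fun hc => ?_⟩
  have : ((p.1 + 1, p.2) : ℤ × ℤ) ∈ L.filter (fun x => x.2 = r.2) :=
    Finset.mem_filter.2 ⟨hc, hp2⟩
  have := hmax _ this
  simp only [] at this
  omega

lemma main_ind : ∀ n : ℕ, ∀ L : Finset (ℤ × ℤ), L.card ≤ n →
    ((1 + Real.sqrt 5) / 2) ^ L.card ≤ ((indepSets L).card : ℝ) := by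
  obtain ⟨hg1, hg2, hgsq⟩ := goldenFacts
  have hg0 : (0:ℝ) ≤ (1 + Real.sqrt 5) / 2 := by linarith
  intro n
  induction n with
  | zero =>
    intro L hL
    have : L = ∅ := Finset.card_eq_zero.1 (Nat.le_zero.1 hL)
    subst this
    have : indepSets ∅ = {∅} := by
      rw [indepSets, Finset.powerset_empty, Finset.filter_singleton, if_pos]
      intro p hp
      simp at hp
    simp [this]
  | succ n ih =>
    intro L hL
    by_cases hc : L.card ≤ n
    · exact ih L hc
    have hcard : L.card = n + 1 := by omega
    have hLne : L.Nonempty := Finset.card_pos.1 (by omega)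
    obtain ⟨p, hp, hr⟩ := exists_rightmost hLne
    set q : ℤ × ℤ := (p.1 - 1, p.2)
    have hrec := indepSets_card_rec hp hr
    have hcard' : (L.erase p).card = n := by
      rw [Finset.card_erase_of_mem hp, hcard]
      omega
    have hih1 : ((1 + Real.sqrt 5) / 2) ^ n ≤ ((indepSets (L.erase p)).card : ℝ) := by
      have := ih (L.erase p) (le_of_eq hcard')
      rwa [hcard'] at this
    by_cases hq : q ∈ L
    · -- q in L : two steps down
      have hqe : q ∈ L.erase p := by
        refine Finset.mem_erase.2 ⟨?_, hq⟩
        intro hc'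
        have : p.1 - 1 = p.1 := congrArg Prod.fst hc'
        omega
      have hcard'' : ((L.erase p).erase q).card = n - 1 := by
        rw [Finset.card_erase_of_mem hqe, hcard']
      have hn1 : 1 ≤ n := by
        have : 0 < (L.erase p).card := Finset.card_pos.2 ⟨q, hqe⟩
        omega
      have hih2 : ((1 + Real.sqrt 5) / 2) ^ (n - 1) ≤
          ((indepSets ((L.erase p).erase q)).card : ℝ) := by
        have := ih ((L.erase p).erase q) (by omega)
        rwa [hcard''] at this
      rw [hcard]
      have hexp : ((1 + Real.sqrt 5) / 2) ^ (n + 1) =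
          ((1 + Real.sqrt 5) / 2) ^ n + ((1 + Real.sqrt 5) / 2) ^ (n - 1) := by
        obtain ⟨m, rfl⟩ : ∃ m, n = m + 1 := ⟨n - 1, by omega⟩
        simp only [Nat.add_sub_cancel]
        rw [show m + 1 + 1 = m + 2 from rfl, pow_add, pow_add, hgsq]
        ring
      rw [hexp]
      calc ((1 + Real.sqrt 5) / 2) ^ n + ((1 + Real.sqrt 5) / 2) ^ (n - 1)
          ≤ ((indepSets (L.erase p)).card : ℝ) +
            ((indepSets ((L.erase p).erase q)).card : ℝ) := add_le_add hih1 hih2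
        _ ≤ ((indepSets L).card : ℝ) := by exact_mod_cast hrec
    · -- q not in L
      have hqe : ((L.erase p).erase q) = L.erase p :=
        Finset.erase_eq_of_notMem (fun hc' => hq (Finset.mem_erase.1 hc').2)
      rw [hqe] at hrec
      rw [hcard]
      calc ((1 + Real.sqrt 5) / 2) ^ (n + 1)
          = ((1 + Real.sqrt 5) / 2) * ((1 + Real.sqrt 5) / 2) ^ n := by ring
        _ ≤ 2 * ((1 + Real.sqrt 5) / 2) ^ n := by
            apply mul_le_mul_of_nonneg_right hg2 (pow_nonneg hg0 n)
        _ ≤ ((indepSets (L.erase p)).card : ℝ) + ((indepSets (L.erase p)).card : ℝ) := by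
            linarith
        _ ≤ ((indepSets L).card : ℝ) := by exact_mod_cast hrec

/-- for every nonempty finite `L ⊂ ℤ²`, `Γ(L, U_B) ≥ g^{|L|}`,
equivalently `(1/|L|) log Γ(L, U_B) ≥ log g`. -/
theorem goldenMeanShift_patternCount_ge_goldenRatio_pow :
    ∀ L : Finset (ℤ × ℤ), L.Nonempty →
      ((1 + Real.sqrt 5) / 2) ^ L.card ≤ (patternCount goldenMeanShift L : ℝ) ∧
      Real.log ((1 + Real.sqrt 5) / 2) ≤
        (1 / (L.card : ℝ)) * Real.log (patternCount goldenMeanShift L) := by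
  intro L hLne
  obtain ⟨hg1, hg2, hgsq⟩ := goldenFacts
  have hpow : ((1 + Real.sqrt 5) / 2) ^ L.card ≤ (patternCount goldenMeanShift L : ℝ) := by
    calc ((1 + Real.sqrt 5) / 2) ^ L.card ≤ ((indepSets L).card : ℝ) :=
          main_ind L.card L le_rfl
      _ ≤ (patternCount goldenMeanShift L : ℝ) := by
          exact_mod_cast indepSets_card_le_patternCount L
  refine ⟨hpow, ?_⟩
  have hcpos : 0 < L.card := Finset.card_pos.2 hLne
  have hn : (0:ℝ) < (L.card : ℝ) := by exact_mod_cast hcpos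
  have hg0 : (0:ℝ) < (1 + Real.sqrt 5) / 2 := by linarith
  have hΓpos : (0:ℝ) < (patternCount goldenMeanShift L : ℝ) :=
    lt_of_lt_of_le (pow_pos hg0 L.card) hpow
  have hlog : (L.card : ℝ) * Real.log ((1 + Real.sqrt 5) / 2) ≤
      Real.log (patternCount goldenMeanShift L) := by
    have := Real.log_le_log (pow_pos hg0 L.card) hpow
    rwa [Real.log_pow] at this
  rw [one_div, inv_mul_eq_div, le_div_iff₀ hn]
  linarith [hlog]
end
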